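/- For each n, k ≥ 2, RCA*₀ proves the equivalence RT^n_k ↔ RT^n_{k+1}. -/

import Mathlib

/-
A formalization framework for second-order arithmetic over weak base theories,
following "Ramsey's theorem over RCA*₀".

We deep-embed the two-sorted language of second-order arithmetic
(number variables, set variables; 0, 1, +, ·, <, ∈) with de Bruijn indices,
define Tarskian satisfaction in a structure (M, 𝒳), the syntactic classes
Δ₀ / Σ_n / Π_n (with bounded quantifiers), the induction, collection and
Δ⁰₁-comprehension schemes, the theories PA⁻, IΣ_n, BΣ_n, RCA*₀, RCA₀,
Ramsey's theorem RT^n_k, Ackermann coding, cuts and Cod(M/I), definable sets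
(boldface and lightface), GPHP and CΣ, and first-order consequence sets.

The axiom `exp` (totality of x ↦ 2^x) is rendered via `ExpRel`:
y = 2^x iff some Δ₀-definable (set-free, with parameters) function witnesses the
doubling recursion from 0 to x; over IΔ₀ this is extensionally the graph of
exponentiation, and `ExpTotal` is the axiom exp.
-/

namespace RM

/-- Terms of arithmetic (number sort), with de Bruijn number variables. -/
inductive Term : Type
  | var : ℕ → Term
  | zero : Term
  | one : Term
  | add : Term → Term → Term
  | mul : Term → Term → Term

/-- Formulas of the two-sorted language of second-order arithmetic.
`mem t i` is `t ∈ X_i` (set variables are de Bruijn indices);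
`ball t φ` / `bex t φ` are the bounded quantifiers ∀x < t.φ / ∃x < t.φ;
`nall`/`nex` quantify over numbers, `sall`/`sex` over sets. -/
inductive Formula : Type
  | eq : Term → Term → Formula
  | lt : Term → Term → Formula
  | mem : Term → ℕ → Formula
  | fneg : Formula → Formula
  | fand : Formula → Formula → Formula
  | forr : Formula → Formula → Formula
  | ball : Term → Formula → Formula
  | bex : Term → Formula → Formula
  | nall : Formula → Formula
  | nex : Formula → Formula
  | sall : Formula → Formula
  | sex : Formula → Formula

/-- A first-order structure in the language 0,1,+,·,<. -/
structure Struct : Type 1 where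
  carrier : Type
  zero : carrier
  one : carrier
  add : carrier → carrier → carrier
  mul : carrier → carrier → carrier
  lt : carrier → carrier → Prop

def Struct.le (S : Struct) (a b : S.carrier) : Prop := S.lt a b ∨ a = b

def Term.val (S : Struct) (v : ℕ → S.carrier) : Term → S.carrier
  | .var i => v i
  | .zero => S.zero
  | .one => S.one
  | .add t u => S.add (t.val S v) (u.val S v)
  | .mul t u => S.mul (t.val S v) (u.val S v)

/-- Prepend a value to a valuation (for de Bruijn binding). -/
def consN {α : Sort*} (a : α) (v : ℕ → α) : ℕ → α
  | 0 => a
  | n + 1 => v n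

/-- Satisfaction in the two-sorted structure (S, 𝒳): `v` is the number
valuation, `V` the set valuation; set quantifiers range over `𝒳`. -/
def Formula.Sat (S : Struct) (𝒳 : Set (Set S.carrier)) :
    Formula → (ℕ → S.carrier) → (ℕ → Set S.carrier) → Prop
  | .eq t u, v, _ => t.val S v = u.val S v
  | .lt t u, v, _ => S.lt (t.val S v) (u.val S v)
  | .mem t i, v, V => t.val S v ∈ V i
  | .fneg φ, v, V => ¬ Formula.Sat S 𝒳 φ v V
  | .fand φ ψ, v, V => Formula.Sat S 𝒳 φ v V ∧ Formula.Sat S 𝒳 ψ v V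
  | .forr φ ψ, v, V => Formula.Sat S 𝒳 φ v V ∨ Formula.Sat S 𝒳 ψ v V
  | .ball t φ, v, V => ∀ a, S.lt a (t.val S v) → Formula.Sat S 𝒳 φ (consN a v) V
  | .bex t φ, v, V => ∃ a, S.lt a (t.val S v) ∧ Formula.Sat S 𝒳 φ (consN a v) V
  | .nall φ, v, V => ∀ a, Formula.Sat S 𝒳 φ (consN a v) V
  | .nex φ, v, V => ∃ a, Formula.Sat S 𝒳 φ (consN a v) V
  | .sall φ, v, V => ∀ A ∈ 𝒳, Formula.Sat S 𝒳 φ v (consN A V)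
  | .sex φ, v, V => ∃ A ∈ 𝒳, Formula.Sat S 𝒳 φ v (consN A V)

/-- First-order ("lightface") formulas: no set variables at all. -/
def Formula.SetFree : Formula → Prop
  | .eq _ _ => True
  | .lt _ _ => True
  | .mem _ _ => False
  | .fneg φ => φ.SetFree
  | .fand φ ψ => φ.SetFree ∧ ψ.SetFree
  | .forr φ ψ => φ.SetFree ∧ ψ.SetFree
  | .ball _ φ => φ.SetFree
  | .bex _ φ => φ.SetFree
  | .nall φ => φ.SetFree
  | .nex φ => φ.SetFree
  | .sall _ => False
  | .sex _ => False

/-- Δ₀ (= Σ⁰₀) formulas: only bounded number quantifiers, no set quantifiers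
(free set variables are allowed). -/
def Formula.IsDelta0 : Formula → Prop
  | .eq _ _ => True
  | .lt _ _ => True
  | .mem _ _ => True
  | .fneg φ => φ.IsDelta0
  | .fand φ ψ => φ.IsDelta0 ∧ ψ.IsDelta0
  | .forr φ ψ => φ.IsDelta0 ∧ ψ.IsDelta0
  | .ball _ φ => φ.IsDelta0
  | .bex _ φ => φ.IsDelta0
  | .nall _ => False
  | .nex _ => False
  | .sall _ => False
  | .sex _ => False

/- The classes Σ_n and Π_n (with free set variables allowed, i.e. Σ⁰_n, Π⁰_n;
lightface classes are obtained by adding `SetFree`). -/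
mutual
  inductive IsSigma : ℕ → Formula → Prop
    | delta0 {n : ℕ} {φ : Formula} : φ.IsDelta0 → IsSigma n φ
    | ex {n : ℕ} {φ : Formula} : IsSigma (n + 1) φ → IsSigma (n + 1) (.nex φ)
    | ofPi {n : ℕ} {φ : Formula} : IsPi n φ → IsSigma (n + 1) φ
  inductive IsPi : ℕ → Formula → Prop
    | delta0 {n : ℕ} {φ : Formula} : φ.IsDelta0 → IsPi n φ
    | all {n : ℕ} {φ : Formula} : IsPi (n + 1) φ → IsPi (n + 1) (.nall φ)
    | ofSigma {n : ℕ} {φ : Formula} : IsSigma n φ → IsPi (n + 1) φ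
end

/-- The basic axioms PA⁻ of a discretely ordered commutative semiring. -/
def PAminus (S : Struct) : Prop :=
  (∀ a b c, S.add (S.add a b) c = S.add a (S.add b c)) ∧
  (∀ a b, S.add a b = S.add b a) ∧
  (∀ a b c, S.mul (S.mul a b) c = S.mul a (S.mul b c)) ∧
  (∀ a b, S.mul a b = S.mul b a) ∧
  (∀ a b c, S.mul a (S.add b c) = S.add (S.mul a b) (S.mul a c)) ∧
  (∀ a, S.add a S.zero = a) ∧
  (∀ a, S.mul a S.zero = S.zero) ∧
  (∀ a, S.mul a S.one = a) ∧
  (∀ a b c, S.lt a b → S.lt b c → S.lt a c) ∧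
  (∀ a, ¬ S.lt a a) ∧
  (∀ a b, S.lt a b ∨ a = b ∨ S.lt b a) ∧
  (∀ a b c, S.lt a b → S.lt (S.add a c) (S.add b c)) ∧
  (∀ a b c, S.lt a b → S.lt S.zero c → S.lt (S.mul a c) (S.mul b c)) ∧
  (∀ a b, S.lt a b → ∃ c, S.add a c = b) ∧
  S.lt S.zero S.one ∧
  (∀ a, S.lt S.zero a → S.le S.one a) ∧
  (∀ a, S.le S.zero a)

/-- Induction scheme for the formulas in class `C` (induction variable is the
de Bruijn variable 0), with set parameters drawn from `P`. -/
def IndScheme (S : Struct) (𝒳 : Set (Set S.carrier)) (C : Formula → Prop)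
    (P : Set (Set S.carrier)) : Prop :=
  ∀ φ, C φ → ∀ (v : ℕ → S.carrier) (V : ℕ → Set S.carrier), (∀ i, V i ∈ P) →
    Formula.Sat S 𝒳 φ (consN S.zero v) V →
    (∀ a, Formula.Sat S 𝒳 φ (consN a v) V →
      Formula.Sat S 𝒳 φ (consN (S.add a S.one) v) V) →
    ∀ a, Formula.Sat S 𝒳 φ (consN a v) V

/-- Collection scheme for the formulas in class `C` (with φ(x,y) having x, y as
de Bruijn variables 0, 1), with set parameters drawn from `P`. -/
def CollScheme (S : Struct) (𝒳 : Set (Set S.carrier)) (C : Formula → Prop)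
    (P : Set (Set S.carrier)) : Prop :=
  ∀ φ, C φ → ∀ (v : ℕ → S.carrier) (V : ℕ → Set S.carrier), (∀ i, V i ∈ P) →
    ∀ a, (∀ x, S.lt x a → ∃ y, Formula.Sat S 𝒳 φ (consN x (consN y v)) V) →
      ∃ b, ∀ x, S.lt x a → ∃ y, S.lt y b ∧ Formula.Sat S 𝒳 φ (consN x (consN y v)) V

/-- IΣ⁰_n : induction for Σ⁰_n formulas with set parameters from 𝒳. -/
def IndB (S : Struct) (𝒳 : Set (Set S.carrier)) (n : ℕ) : Prop :=
  IndScheme S 𝒳 (IsSigma n) 𝒳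

/-- BΣ⁰_n : collection for Σ⁰_n formulas with set parameters from 𝒳. -/
def CollB (S : Struct) (𝒳 : Set (Set S.carrier)) (n : ℕ) : Prop :=
  CollScheme S 𝒳 (IsSigma n) 𝒳

/-- Σ⁰₀ (Δ⁰₀) induction with set parameters from 𝒳. -/
def Delta0IndB (S : Struct) (𝒳 : Set (Set S.carrier)) : Prop :=
  IndScheme S 𝒳 Formula.IsDelta0 𝒳

/-- Lightface IΣ_n scheme. -/
def IndL (S : Struct) (n : ℕ) : Prop :=
  IndScheme S ∅ (fun φ => IsSigma n φ ∧ φ.SetFree) Set.univ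

/-- Lightface BΣ_n scheme. -/
def CollL (S : Struct) (n : ℕ) : Prop :=
  CollScheme S ∅ (fun φ => IsSigma n φ ∧ φ.SetFree) Set.univ

/-- Lightface Δ₀ induction scheme. -/
def Delta0IndL (S : Struct) : Prop :=
  IndScheme S ∅ (fun φ => φ.IsDelta0 ∧ φ.SetFree) Set.univ

/-- Δ⁰₁-comprehension. -/
def Delta1CA (S : Struct) (𝒳 : Set (Set S.carrier)) : Prop :=
  ∀ φ ψ, IsSigma 1 φ → IsPi 1 ψ →
    ∀ (v : ℕ → S.carrier) (V : ℕ → Set S.carrier), (∀ i, V i ∈ 𝒳) →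
      (∀ a, Formula.Sat S 𝒳 φ (consN a v) V ↔ Formula.Sat S 𝒳 ψ (consN a v) V) →
      {a | Formula.Sat S 𝒳 φ (consN a v) V} ∈ 𝒳

/-- `ExpRel S a p` : p = 2^a, rendered as: some set-free Δ₀-definable
(with parameters v) relation is the graph of a function on [0,a] satisfying the
doubling recursion with value p at a.  Over IΔ₀ this is extensionally the graph
of exponentiation. -/
def ExpRel (S : Struct) (a p : S.carrier) : Prop :=
  ∃ (φ : Formula) (v : ℕ → S.carrier), φ.IsDelta0 ∧ φ.SetFree ∧
    (∀ x y y', Formula.Sat S ∅ φ (consN x (consN y v)) (fun _ => ∅) →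
      Formula.Sat S ∅ φ (consN x (consN y' v)) (fun _ => ∅) → y = y') ∧
    (∀ x, S.le x a → ∃ y, Formula.Sat S ∅ φ (consN x (consN y v)) (fun _ => ∅)) ∧
    Formula.Sat S ∅ φ (consN S.zero (consN S.one v)) (fun _ => ∅) ∧
    (∀ x y, S.lt x a → Formula.Sat S ∅ φ (consN x (consN y v)) (fun _ => ∅) →
      Formula.Sat S ∅ φ (consN (S.add x S.one) (consN (S.add y y) v)) (fun _ => ∅)) ∧
    Formula.Sat S ∅ φ (consN a (consN p v)) (fun _ => ∅)

/-- The axiom exp: x ↦ 2^x is total. -/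
def ExpTotal (S : Struct) : Prop := ∀ a, ∃ p, ExpRel S a p

/-- Ackermann membership: the a-th binary digit of s is 1, i.e.
s = q·2^(a+1) + 2^a + r with r < 2^a. -/
def AckMem (S : Struct) (a s : S.carrier) : Prop :=
  ∃ p q r, ExpRel S a p ∧ S.lt r p ∧
    s = S.add (S.add (S.mul q (S.add p p)) p) r

/-- Cuts: subsets containing 0, closed under successor and downwards. -/
def IsCut (S : Struct) (I : Set S.carrier) : Prop :=
  S.zero ∈ I ∧ (∀ a ∈ I, S.add a S.one ∈ I) ∧ (∀ a b, S.lt a b → b ∈ I → a ∈ I)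

def IsProperCut (S : Struct) (I : Set S.carrier) : Prop :=
  IsCut S I ∧ I ≠ Set.univ

/-- Cod(M/I): the subsets of I coded in M via Ackermann coding. -/
def Cod (S : Struct) (I : Set S.carrier) : Set (Set S.carrier) :=
  {B | ∃ s, B = {a | a ∈ I ∧ AckMem S a s}}

/-- Bounded subsets of the model. -/
def Bdd (S : Struct) (X : Set S.carrier) : Prop := ∃ b, ∀ x ∈ X, S.lt x b

/-- Boldface Σ⁰_n-definable sets of (S,𝒳) (number parameters, set parameters from 𝒳). -/
def SigmaDef (S : Struct) (𝒳 : Set (Set S.carrier)) (n : ℕ) (A : Set S.carrier) : Prop :=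
  ∃ (φ : Formula) (v : ℕ → S.carrier) (V : ℕ → Set S.carrier), IsSigma n φ ∧ (∀ i, V i ∈ 𝒳) ∧
    A = {a | Formula.Sat S 𝒳 φ (consN a v) V}

def PiDef (S : Struct) (𝒳 : Set (Set S.carrier)) (n : ℕ) (A : Set S.carrier) : Prop :=
  ∃ (φ : Formula) (v : ℕ → S.carrier) (V : ℕ → Set S.carrier), IsPi n φ ∧ (∀ i, V i ∈ 𝒳) ∧
    A = {a | Formula.Sat S 𝒳 φ (consN a v) V}

def DeltaDef (S : Struct) (𝒳 : Set (Set S.carrier)) (n : ℕ) (A : Set S.carrier) : Prop :=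
  SigmaDef S 𝒳 n A ∧ PiDef S 𝒳 n A

/-- The family Δ⁰_n-Def(M,𝒳). -/
def DeltaFam (S : Struct) (𝒳 : Set (Set S.carrier)) (n : ℕ) : Set (Set S.carrier) :=
  {A | DeltaDef S 𝒳 n A}

/-- Lightface Σ_n-definable sets (number parameters only). -/
def SigmaDefL (S : Struct) (n : ℕ) (A : Set S.carrier) : Prop :=
  ∃ (φ : Formula) (v : ℕ → S.carrier), IsSigma n φ ∧ φ.SetFree ∧
    A = {a | Formula.Sat S ∅ φ (consN a v) (fun _ => ∅)}

def PiDefL (S : Struct) (n : ℕ) (A : Set S.carrier) : Prop :=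
  ∃ (φ : Formula) (v : ℕ → S.carrier), IsPi n φ ∧ φ.SetFree ∧
    A = {a | Formula.Sat S ∅ φ (consN a v) (fun _ => ∅)}

def DeltaDefL (S : Struct) (n : ℕ) (A : Set S.carrier) : Prop :=
  SigmaDefL S n A ∧ PiDefL S n A

/-- The family Δ_n-Def(M) of lightface Δ_n-definable sets. -/
def DeltaFamL (S : Struct) (n : ℕ) : Set (Set S.carrier) :=
  {A | DeltaDefL S n A}

/-- Σ_n-definable with the single set parameter A (all set variables read A). -/
def SigmaDefIn (S : Struct) (A : Set S.carrier) (n : ℕ) (B : Set S.carrier) : Prop :=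
  ∃ (φ : Formula) (v : ℕ → S.carrier), IsSigma n φ ∧
    B = {a | Formula.Sat S ∅ φ (consN a v) (fun _ => A)}

def PiDefIn (S : Struct) (A : Set S.carrier) (n : ℕ) (B : Set S.carrier) : Prop :=
  ∃ (φ : Formula) (v : ℕ → S.carrier), IsPi n φ ∧
    B = {a | Formula.Sat S ∅ φ (consN a v) (fun _ => A)}

/-- B is Δ₁(A). -/
def Delta1In (S : Struct) (A B : Set S.carrier) : Prop :=
  SigmaDefIn S A 1 B ∧ PiDefIn S A 1 B

/-- RCA*₀ : PA⁻ + Δ⁰₁-CA + Σ⁰₀-induction + BΣ⁰₁ + exp. -/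
def RCAstar (S : Struct) (𝒳 : Set (Set S.carrier)) : Prop :=
  PAminus S ∧ Delta0IndB S 𝒳 ∧ CollB S 𝒳 1 ∧ Delta1CA S 𝒳 ∧ ExpTotal S

/-- RCA₀ : RCA*₀ with BΣ⁰₁ strengthened to IΣ⁰₁. -/
def RCA0 (S : Struct) (𝒳 : Set (Set S.carrier)) : Prop :=
  RCAstar S 𝒳 ∧ IndB S 𝒳 1

/-- Lightface first-order theories (over PA⁻, resp. with IΔ₀). -/
def ISigmaT (S : Struct) (n : ℕ) : Prop := PAminus S ∧ IndL S n

def BSigmaT (S : Struct) (n : ℕ) : Prop := PAminus S ∧ Delta0IndL S ∧ CollL S n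

def PAT (S : Struct) : Prop := PAminus S ∧ ∀ n, IndL S n

/-- The theory IB : BΣ₁ + { IΣ_ℓ ⇒ BΣ_{ℓ+1} : ℓ ≥ 1 }. -/
def IBT (S : Struct) : Prop :=
  BSigmaT S 1 ∧ ∀ ℓ, 1 ≤ ℓ → (IndL S ℓ → CollL S (ℓ + 1))

/-- The numeral map ℕ → M. -/
def ofNat (S : Struct) : ℕ → S.carrier
  | 0 => S.zero
  | n + 1 => S.add (ofNat S n) S.one

/-- Cantor pairing (as a relation): z = ((x+y)(x+y+1))/2 + y. -/
def pairRel (S : Struct) (x y z : S.carrier) : Prop :=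
  S.add z z = S.add (S.mul (S.add x y) (S.add (S.add x y) S.one)) (S.add y y)

/-- Coding of nonempty tuples by iterated Cantor pairing (as a relation). -/
def listCode (S : Struct) : List S.carrier → S.carrier → Prop
  | [], _ => False
  | [x], c => c = x
  | x :: y :: xs, c => ∃ w, listCode S (y :: xs) w ∧ pairRel S x w c

/-- Strictly increasing n-tuples (elements of [M]^n). -/
def Incr (S : Struct) {n : ℕ} (x : Fin n → S.carrier) : Prop :=
  ∀ i j : Fin n, i < j → S.lt (x i) (x j)

/-- `F` is (the code of) the colouring `f` of [M]^n with k colours: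
for every increasing tuple x̄ and colour i, the code ⟨x̄, i⟩ lies in F iff f(x̄) = i. -/
def CodesCol (S : Struct) {n k : ℕ} (F : Set S.carrier)
    (f : (Fin n → S.carrier) → Fin k) : Prop :=
  ∀ x : Fin n → S.carrier, Incr S x → ∀ (i : Fin k) (c : S.carrier),
    listCode S (List.ofFn x ++ [ofNat S i.val]) c → (c ∈ F ↔ f x = i)

/-- H is unbounded ("infinite"). -/
def Unbdd (S : Struct) (H : Set S.carrier) : Prop := ∀ a, ∃ b ∈ H, S.lt a b

/-- H is homogeneous for f. -/
def Homog (S : Struct) {n k : ℕ} (f : (Fin n → S.carrier) → Fin k)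
    (H : Set S.carrier) : Prop :=
  ∃ i : Fin k, ∀ x : Fin n → S.carrier, Incr S x → (∀ j, x j ∈ H) → f x = i

/-- (S,𝒳) ⊨ RT^n_k : every k-colouring of [M]^n coded by a set in 𝒳 has an
unbounded homogeneous set in 𝒳. -/
def RT (S : Struct) (𝒳 : Set (Set S.carrier)) (n k : ℕ) : Prop :=
  ∀ (F : Set S.carrier) (f : (Fin n → S.carrier) → Fin k),
    F ∈ 𝒳 → CodesCol S F f → ∃ H ∈ 𝒳, Unbdd S H ∧ Homog S f H

/-- The first-order statement Δ_ℓ-RT^n_k : (M, Δ_ℓ-Def(M)) ⊨ RT^n_k. -/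
def DeltaRT (S : Struct) (ℓ n k : ℕ) : Prop := RT S (DeltaFamL S ℓ) n k

/-- Δ⁰₂-RT²₂ : (M, Δ⁰₂-Def(M,𝒳)) ⊨ RT²₂. -/
def D2RT (S : Struct) (𝒳 : Set (Set S.carrier)) : Prop := RT S (DeltaFam S 𝒳 2) 2 2

/-- (I, Cod(M/I)) ⊨ RT^n_k, where colourings of [I]^n and subsets of I are
those coded in M (via Cantor pairing and Ackermann coding). -/
def RTcut (S : Struct) (I : Set S.carrier) (n k : ℕ) : Prop :=
  ∀ f : (Fin n → S.carrier) → Fin k,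
    (∃ s, ∀ x : Fin n → S.carrier, Incr S x → (∀ j, x j ∈ I) →
      ∀ (i : Fin k) (c : S.carrier), listCode S (List.ofFn x ++ [ofNat S i.val]) c →
        (AckMem S c s ↔ f x = i)) →
    ∃ H ∈ Cod S I, (∀ a ∈ I, ∃ b ∈ H, S.lt a b) ∧ Homog S f H

/-- GPHP(Σ_n(X)) : the generalized pigeonhole principle for Σ_n formulas with
set parameter X.  φ(x,y,z) has x,y,z as de Bruijn variables 0,1,2 (further
number parameters allowed). -/
def GPHPparam (S : Struct) (X : Set S.carrier) (n : ℕ) : Prop :=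
  ∀ φ, IsSigma n φ → ∀ (v : ℕ → S.carrier) (a : S.carrier), ∃ b, ¬ ∃ c,
    (∀ x, S.lt x b → ∃ y, S.lt y a ∧
      Formula.Sat S ∅ φ (consN x (consN y (consN c v))) (fun _ => X)) ∧
    (∀ y x x', S.lt y a → S.lt x b → S.lt x' b →
      Formula.Sat S ∅ φ (consN x (consN y (consN c v))) (fun _ => X) →
      Formula.Sat S ∅ φ (consN x' (consN y (consN c v))) (fun _ => X) → x = x')

/-- Lightface GPHP(Σ_n). -/
def GPHPL (S : Struct) (n : ℕ) : Prop :=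
  ∀ φ, IsSigma n φ → φ.SetFree → ∀ (v : ℕ → S.carrier) (a : S.carrier), ∃ b, ¬ ∃ c,
    (∀ x, S.lt x b → ∃ y, S.lt y a ∧
      Formula.Sat S ∅ φ (consN x (consN y (consN c v))) (fun _ => ∅)) ∧
    (∀ y x x', S.lt y a → S.lt x b → S.lt x' b →
      Formula.Sat S ∅ φ (consN x (consN y (consN c v))) (fun _ => ∅) →
      Formula.Sat S ∅ φ (consN x' (consN y (consN c v))) (fun _ => ∅) → x = x')

/-- BΣ_n(X) : collection for Σ_n formulas with set parameter X. -/
def CollParam (S : Struct) (X : Set S.carrier) (n : ℕ) : Prop :=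
  ∀ φ, IsSigma n φ → ∀ (v : ℕ → S.carrier) (a : S.carrier),
    (∀ x, S.lt x a → ∃ y, Formula.Sat S ∅ φ (consN x (consN y v)) (fun _ => X)) →
    ∃ b, ∀ x, S.lt x a → ∃ y, S.lt y b ∧
      Formula.Sat S ∅ φ (consN x (consN y v)) (fun _ => X)

/-- The cardinality scheme CΣ_n : no Σ_n formula defines a total injection
with bounded range. -/
def CSigmaL (S : Struct) (n : ℕ) : Prop :=
  ∀ φ, IsSigma n φ → φ.SetFree → ∀ (v : ℕ → S.carrier) (a : S.carrier),
    ¬ ((∀ x, ∃ y, S.lt y a ∧ Formula.Sat S ∅ φ (consN x (consN y v)) (fun _ => ∅)) ∧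
       (∀ x y y', Formula.Sat S ∅ φ (consN x (consN y v)) (fun _ => ∅) →
         Formula.Sat S ∅ φ (consN x (consN y' v)) (fun _ => ∅) → y = y') ∧
       (∀ x x' y, Formula.Sat S ∅ φ (consN x (consN y v)) (fun _ => ∅) →
         Formula.Sat S ∅ φ (consN x' (consN y v)) (fun _ => ∅) → x = x'))

/-- Truth of a first-order formula in S (free variables read universally). -/
def SatFO (S : Struct) (ψ : Formula) : Prop :=
  ∀ v : ℕ → S.carrier, Formula.Sat S ∅ ψ v (fun _ => ∅)

/-- The first-order consequences of a (semantically presented) first-order theory. -/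
def Csq (T : Struct → Prop) : Set Formula :=
  {ψ | ψ.SetFree ∧ ∀ S : Struct, T S → SatFO S ψ}

/-- The first-order consequences of RCA*₀ + RT^n_k. -/
def CsqRT (n k : ℕ) : Set Formula :=
  {ψ | ψ.SetFree ∧ ∀ (S : Struct) (𝒳 : Set (Set S.carrier)),
    RCAstar S 𝒳 → RT S 𝒳 n k → SatFO S ψ}

/-- Π_m sentences (lightface). -/
def PiSent (m : ℕ) : Set Formula := {ψ | IsPi m ψ ∧ ψ.SetFree}

/-- The theory R^n = { (BΣ_{ℓ+1} ∧ exp) ∨ ⋁_{j=1}^{ℓ} Δ_j-RT^n_2 : ℓ ∈ ω }. -/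
def Rn (S : Struct) (n : ℕ) : Prop :=
  ∀ ℓ : ℕ, (BSigmaT S (ℓ + 1) ∧ ExpTotal S) ∨ ∃ j, 1 ≤ j ∧ j ≤ ℓ ∧ DeltaRT S j n 2

/-- "0^(ℓ) ∈ 𝒳", rendered as: 𝒳 contains a Σ_ℓ-definable set A such that every
lightface Σ_ℓ-definable set is Δ₁(A) (this pins A down as a Σ_ℓ-complete set,
which is exactly the role of 0^(ℓ) = {e : Sat_ℓ(e,e)}). -/
def JumpIn (S : Struct) (𝒳 : Set (Set S.carrier)) (ℓ : ℕ) : Prop :=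
  ∃ A ∈ 𝒳, SigmaDefL S ℓ A ∧ ∀ B : Set S.carrier, SigmaDefL S ℓ B → Delta1In S A B

section Aux

variable {S : Struct}

@[simp] theorem consN_zero {α : Sort*} (a : α) (v : ℕ → α) : consN a v 0 = a := rfl
@[simp] theorem consN_succ {α : Sort*} (a : α) (v : ℕ → α) (n : ℕ) : consN a v (n+1) = v n := rfl

namespace PA

variable (h : PAminus S)
include h

theorem add_assoc' : ∀ a b c, S.add (S.add a b) c = S.add a (S.add b c) := h.1
theorem add_comm' : ∀ a b, S.add a b = S.add b a := h.2.1
theorem mul_assoc' : ∀ a b c, S.mul (S.mul a b) c = S.mul a (S.mul b c) := h.2.2.1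
theorem mul_comm' : ∀ a b, S.mul a b = S.mul b a := h.2.2.2.1
theorem ldistrib : ∀ a b c, S.mul a (S.add b c) = S.add (S.mul a b) (S.mul a c) := h.2.2.2.2.1
theorem add_zero' : ∀ a, S.add a S.zero = a := h.2.2.2.2.2.1
theorem mul_zero' : ∀ a, S.mul a S.zero = S.zero := h.2.2.2.2.2.2.1
theorem mul_one' : ∀ a, S.mul a S.one = a := h.2.2.2.2.2.2.2.1
theorem lt_trans' : ∀ a b c, S.lt a b → S.lt b c → S.lt a c := h.2.2.2.2.2.2.2.2.1
theorem lt_irrefl' : ∀ a, ¬ S.lt a a := h.2.2.2.2.2.2.2.2.2.1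
theorem tri : ∀ a b, S.lt a b ∨ a = b ∨ S.lt b a := h.2.2.2.2.2.2.2.2.2.2.1
theorem add_lt_right : ∀ a b c, S.lt a b → S.lt (S.add a c) (S.add b c) := h.2.2.2.2.2.2.2.2.2.2.2.1
theorem mul_lt_right : ∀ a b c, S.lt a b → S.lt S.zero c → S.lt (S.mul a c) (S.mul b c) :=
  h.2.2.2.2.2.2.2.2.2.2.2.2.1
theorem exadd : ∀ a b, S.lt a b → ∃ c, S.add a c = b := h.2.2.2.2.2.2.2.2.2.2.2.2.2.1
theorem zero_lt_one' : S.lt S.zero S.one := h.2.2.2.2.2.2.2.2.2.2.2.2.2.2.1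
theorem one_le' : ∀ a, S.lt S.zero a → S.le S.one a := h.2.2.2.2.2.2.2.2.2.2.2.2.2.2.2.1
theorem zero_le' : ∀ a, S.le S.zero a := h.2.2.2.2.2.2.2.2.2.2.2.2.2.2.2.2

/-- The commutative semiring structure determined by `PAminus`. -/
def csr : CommSemiring S.carrier :=
  letI : Zero S.carrier := ⟨S.zero⟩
  letI : One S.carrier := ⟨S.one⟩
  letI : Add S.carrier := ⟨S.add⟩
  letI : Mul S.carrier := ⟨S.mul⟩
  { add := S.add
    zero := S.zero
    add_assoc := h.1
    add_comm := h.2.1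
    zero_add := fun a => by show S.add S.zero a = a; rw [PA.add_comm' h]; exact PA.add_zero' h a
    add_zero := PA.add_zero' h
    mul := S.mul
    one := S.one
    mul_assoc := PA.mul_assoc' h
    mul_comm := PA.mul_comm' h
    one_mul := fun a => by show S.mul S.one a = a; rw [PA.mul_comm' h]; exact PA.mul_one' h a
    mul_one := PA.mul_one' h
    left_distrib := PA.ldistrib h
    right_distrib := fun a b c => by
      show S.mul (S.add a b) c = S.add (S.mul a c) (S.mul b c)
      rw [PA.mul_comm' h, PA.ldistrib h, PA.mul_comm' h c a, PA.mul_comm' h c b]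
    zero_mul := fun a => by show S.mul S.zero a = S.zero; rw [PA.mul_comm' h]; exact PA.mul_zero' h a
    mul_zero := PA.mul_zero' h
    nsmul := nsmulRec
    npow := npowRec }

theorem lt_asymm' : ∀ a b, S.lt a b → ¬ S.lt b a := fun a b hab hba =>
  PA.lt_irrefl' h a (PA.lt_trans' h a b a hab hba)

theorem notlt_zero : ∀ a, ¬ S.lt a S.zero := by
  intro a ha
  rcases PA.zero_le' h a with h0 | h0
  · exact PA.lt_asymm' h _ _ ha h0
  · rw [← h0] at ha; exact PA.lt_irrefl' h _ ha

theorem not_lt_iff {a b : S.carrier} : ¬ S.lt a b ↔ (b = a ∨ S.lt b a) := by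
  constructor
  · intro hn
    rcases PA.tri h a b with h1 | h1 | h1
    · exact absurd h1 hn
    · exact Or.inl h1.symm
    · exact Or.inr h1
  · intro h1 hab
    rcases h1 with h1 | h1
    · rw [h1] at hab; exact PA.lt_irrefl' h _ hab
    · exact PA.lt_asymm' h _ _ h1 hab

theorem add_lt_left : ∀ a b c, S.lt a b → S.lt (S.add c a) (S.add c b) := by
  intro a b c hab
  rw [PA.add_comm' h c a, PA.add_comm' h c b]
  exact PA.add_lt_right h a b c hab

theorem cancel_lt {a b c : S.carrier} (hh : S.lt (S.add a c) (S.add b c)) : S.lt a b := by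
  rcases PA.tri h a b with h1 | h1 | h1
  · exact h1
  · subst h1; exact absurd hh (PA.lt_irrefl' h _)
  · exact absurd hh (PA.lt_asymm' h _ _ (PA.add_lt_right h _ _ _ h1))

theorem cancel_eq {a b c : S.carrier} (hh : S.add a c = S.add b c) : a = b := by
  rcases PA.tri h a b with h1 | h1 | h1
  · have := PA.add_lt_right h a b c h1; rw [hh] at this; exact absurd this (PA.lt_irrefl' h _)
  · exact h1
  · have := PA.add_lt_right h b a c h1; rw [hh] at this; exact absurd this (PA.lt_irrefl' h _)

/-- `lee a b` : `a ≤ b` in the model. -/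
theorem lee_add_right {a b : S.carrier} (hab : S.le a b) (c : S.carrier) :
    S.le (S.add a c) (S.add b c) := by
  rcases hab with h1 | h1
  · exact Or.inl (PA.add_lt_right h _ _ _ h1)
  · exact Or.inr (by rw [h1])

theorem lee_add_left {a b : S.carrier} (hab : S.le a b) (c : S.carrier) :
    S.le (S.add c a) (S.add c b) := by
  rw [PA.add_comm' h c a, PA.add_comm' h c b]; exact PA.lee_add_right h hab c

theorem lt_of_le_of_lt' {a b c : S.carrier} (h1 : S.le a b) (h2 : S.lt b c) : S.lt a c := by
  rcases h1 with h1 | h1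
  · exact PA.lt_trans' h _ _ _ h1 h2
  · rw [h1]; exact h2

theorem lt_of_lt_of_le' {a b c : S.carrier} (h1 : S.lt a b) (h2 : S.le b c) : S.lt a c := by
  rcases h2 with h2 | h2
  · exact PA.lt_trans' h _ _ _ h1 h2
  · rw [← h2]; exact h1

theorem lee_trans {a b c : S.carrier} (h1 : S.le a b) (h2 : S.le b c) : S.le a c := by
  rcases h1 with h1 | h1
  · exact Or.inl (PA.lt_of_lt_of_le' h h1 h2)
  · rw [h1]; exact h2

theorem lee_of_not_lt {a b : S.carrier} (hn : ¬ S.lt a b) : S.le b a := by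
  rcases PA.not_lt_iff h |>.1 hn with h1 | h1
  · exact Or.inr h1
  · exact Or.inl h1

theorem not_lt_of_lee {a b : S.carrier} (hab : S.le a b) : ¬ S.lt b a := by
  rcases hab with h1 | h1
  · exact PA.lt_asymm' h _ _ h1
  · rw [h1]; exact PA.lt_irrefl' h b

theorem exadd_le {a b : S.carrier} (hab : S.le a b) : ∃ c, S.add a c = b := by
  rcases hab with h1 | h1
  · exact PA.exadd h _ _ h1
  · exact ⟨S.zero, by rw [PA.add_zero' h, h1]⟩

theorem le_self_add {a c : S.carrier} : S.le a (S.add a c) := by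
  rcases PA.zero_le' h c with h1 | h1
  · left
    have := PA.add_lt_left h _ _ a h1
    rwa [PA.add_zero' h] at this
  · right; rw [← h1, PA.add_zero' h]

theorem lee_of_eq_add {a b c : S.carrier} (hh : S.add a c = b) : S.le a b := by
  rw [← hh]; exact PA.le_self_add h

theorem add_lee {a b c d : S.carrier} (h1 : S.le a b) (h2 : S.le c d) :
    S.le (S.add a c) (S.add b d) :=
  PA.lee_trans h (PA.lee_add_right h h1 c) (PA.lee_add_left h h2 b)

theorem mul_lee {a b c d : S.carrier} (h1 : S.le a b) (h2 : S.le c d) :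
    S.le (S.mul a c) (S.mul b d) := by
  obtain ⟨e, he⟩ := PA.exadd_le h h1
  obtain ⟨f, hf⟩ := PA.exadd_le h h2
  apply PA.lee_of_eq_add h (c := S.add (S.mul a f) (S.add (S.mul e c) (S.mul e f)))
  letI := PA.csr h
  show a * c + (a * f + (e * c + e * f)) = b * d
  rw [← he, ← hf]
  show a * c + (a * f + (e * c + e * f)) = (a + e) * (c + f)
  ring

theorem lt_succ {a : S.carrier} : S.lt a (S.add a S.one) := by
  have := PA.add_lt_left h _ _ a (PA.zero_lt_one' h)
  rwa [PA.add_zero' h] at this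

theorem succ_le_of_lt {a b : S.carrier} (hab : S.lt a b) : S.le (S.add a S.one) b := by
  obtain ⟨c, hc⟩ := PA.exadd h _ _ hab
  have hc0 : S.lt S.zero c := by
    rcases PA.zero_le' h c with h1 | h1
    · exact h1
    · exfalso; rw [← h1, PA.add_zero' h] at hc; rw [hc] at hab; exact PA.lt_irrefl' h _ hab
  have h1c : S.le S.one c := PA.one_le' h c hc0
  have : S.le (S.add a S.one) (S.add a c) := PA.lee_add_left h h1c a
  rwa [hc] at this

theorem lt_succ_le {a b : S.carrier} (hab : S.le a b) : S.lt a (S.add b S.one) :=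
  PA.lt_of_le_of_lt' h hab (PA.lt_succ h)

theorem lt_succ_iff {a b : S.carrier} : S.lt a (S.add b S.one) ↔ S.le a b := by
  constructor
  · intro hh
    by_contra hn
    have hba : S.lt b a := by
      rcases PA.not_lt_iff (a := a) (b := b) h |>.1 (fun hl => hn (Or.inl hl)) with h1 | h1
      · exact absurd h1.symm (fun he => hn (Or.inr he))
      · exact h1
    exact PA.not_lt_of_lee h (PA.succ_le_of_lt h hba) hh
  · exact PA.lt_succ_le h

theorem dbl_lt {a b : S.carrier} (hab : S.lt a b) : S.lt (S.add a a) (S.add b b) :=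
  PA.lt_trans' h _ _ _ (PA.add_lt_right h _ _ _ hab) (PA.add_lt_left h _ _ _ hab)

theorem dbl_cancel_lee {a b : S.carrier} (hh : S.le (S.add a a) (S.add b b)) : S.le a b := by
  by_contra hn
  have hba : S.lt b a := by
    rcases PA.not_lt_iff (a := a) (b := b) h |>.1 (fun hl => hn (Or.inl hl)) with h1 | h1
    · exact absurd h1.symm (fun he => hn (Or.inr he))
    · exact h1
  exact PA.not_lt_of_lee h hh (PA.dbl_lt h hba)

theorem dbl_cancel_eq {a b : S.carrier} (hh : S.add a a = S.add b b) : a = b := by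
  rcases PA.tri h a b with h1 | h1 | h1
  · exact absurd hh (fun he => PA.lt_irrefl' h _ (he ▸ PA.dbl_lt h h1))
  · exact h1
  · exact absurd hh.symm (fun he => PA.lt_irrefl' h _ (he ▸ PA.dbl_lt h h1))

theorem eq_zero_of_le_zero {a : S.carrier} (hh : S.le a S.zero) : a = S.zero := by
  rcases hh with h1 | h1
  · exact absurd h1 (PA.notlt_zero h a)
  · exact h1

theorem lt_self_add_pos {a c : S.carrier} (hc : S.lt S.zero c) : S.lt a (S.add a c) := by
  have := PA.add_lt_left h _ _ a hc
  rwa [PA.add_zero' h] at this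

theorem lee_refl (a : S.carrier) : S.le a a := Or.inr rfl

theorem ofNat_lt' : ∀ {i j : ℕ}, i < j → S.lt (ofNat S i) (ofNat S j) := by
  intro i j hij
  induction j with
  | zero => omega
  | succ j ih =>
    rcases Nat.lt_succ_iff_lt_or_eq.1 hij with hh | hh
    · exact PA.lt_trans' h _ _ _ (ih hh) (PA.lt_succ h)
    · subst hh; exact PA.lt_succ h

theorem ofNat_lt_iff {i j : ℕ} : S.lt (ofNat S i) (ofNat S j) ↔ i < j := by
  constructor
  · intro hh
    rcases Nat.lt_trichotomy i j with h1 | h1 | h1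
    · exact h1
    · subst h1; exact absurd hh (PA.lt_irrefl' h _)
    · exact absurd hh (PA.lt_asymm' h _ _ (PA.ofNat_lt' h h1))
  · exact PA.ofNat_lt' h

theorem ofNat_eq_iff {i j : ℕ} : ofNat S i = ofNat S j ↔ i = j := by
  constructor
  · intro hh
    rcases Nat.lt_trichotomy i j with h1 | h1 | h1
    · exact absurd (PA.ofNat_lt' h h1) (by rw [hh]; exact PA.lt_irrefl' h _)
    · exact h1
    · exact absurd (PA.ofNat_lt' h h1) (by rw [hh]; exact PA.lt_irrefl' h _)
  · intro hh; rw [hh]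

theorem pair_fun {x y z z' : S.carrier} (h1 : pairRel S x y z) (h2 : pairRel S x y z') :
    z = z' := by
  unfold pairRel at h1 h2
  exact PA.dbl_cancel_eq h (h1.trans h2.symm)

theorem pair_bound {x y z : S.carrier} (hp : pairRel S x y z) : S.le x z ∧ S.le y z := by
  unfold pairRel at hp
  have hds : S.add z z = S.add (S.add y y) (S.mul (S.add x y) (S.add (S.add x y) S.one)) := by
    rw [hp, PA.add_comm' h]
  constructor
  · rcases PA.zero_le' h (S.add x y) with hs | hs
    · have h2 : S.le (S.add S.one S.one) (S.add (S.add x y) S.one) :=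
        PA.lee_add_right h (PA.one_le' h _ hs) S.one
      have h3 : S.le (S.mul (S.add x y) (S.add S.one S.one))
          (S.mul (S.add x y) (S.add (S.add x y) S.one)) := PA.mul_lee h (PA.lee_refl h _) h2
      have h4 : S.mul (S.add x y) (S.add S.one S.one) = S.add (S.add x y) (S.add x y) := by
        letI := PA.csr h
        show (x + y) * (1 + 1) = (x + y) + (x + y)
        ring
      have h5 : S.le (S.add x x) (S.add (S.add x y) (S.add x y)) :=
        PA.add_lee h (PA.le_self_add h) (PA.le_self_add h)
      have h6 : S.le (S.add x x) (S.add z z) := by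
        refine PA.lee_trans h h5 ?_
        rw [← h4] at *
        refine PA.lee_trans h h3 ?_
        rw [hp]
        exact PA.le_self_add h
      exact PA.dbl_cancel_lee h h6
    · have hx0 : x = S.zero := by
        apply PA.eq_zero_of_le_zero h
        rw [hs]
        exact PA.le_self_add h
      rw [hx0]; exact PA.zero_le' h z
  · apply PA.dbl_cancel_lee h
    rw [hds]
    exact PA.le_self_add h

theorem pair_sum_lt_aux {x y a b z : S.carrier} (h1 : pairRel S x y z) (h2 : pairRel S a b z)
    (hlt : S.lt (S.add x y) (S.add a b)) : False := by
  unfold pairRel at h1 h2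
  set s := S.add x y with hsdef
  set t := S.add a b with htdef
  have hzz : S.le (S.add z z) (S.add (S.mul s (S.add s S.one)) (S.add s s)) := by
    rw [h1]
    refine PA.lee_add_left h ?_ _
    refine PA.add_lee h ?_ ?_ <;>
    · rw [hsdef, PA.add_comm' h x y]; exact PA.le_self_add h
  have key1 : S.add (S.add (S.mul s (S.add s S.one)) (S.add s s)) (S.add S.one S.one)
      = S.mul (S.add s S.one) (S.add s (S.add S.one S.one)) := by
    letI := PA.csr h
    show s * (s + 1) + (s + s) + (1 + 1) = (s + 1) * (s + (1 + 1))
    ring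
  have h11 : S.lt S.zero (S.add S.one S.one) :=
    PA.lt_trans' h _ _ _ (PA.zero_lt_one' h) (PA.lt_succ h)
  have key2 : S.lt (S.add (S.mul s (S.add s S.one)) (S.add s s))
      (S.mul (S.add s S.one) (S.add s (S.add S.one S.one))) := by
    rw [← key1]; exact PA.lt_self_add_pos h h11
  have hst : S.le (S.add s S.one) t := PA.succ_le_of_lt h hlt
  have hst2 : S.le (S.add s (S.add S.one S.one)) (S.add t S.one) := by
    have := PA.lee_add_right h hst S.one
    have heq : S.add (S.add s S.one) S.one = S.add s (S.add S.one S.one) := PA.add_assoc' h _ _ _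
    rwa [heq] at this
  have key3 : S.le (S.mul (S.add s S.one) (S.add s (S.add S.one S.one)))
      (S.mul t (S.add t S.one)) := PA.mul_lee h hst hst2
  have key4 : S.le (S.mul t (S.add t S.one)) (S.add z z) := by
    rw [h2]; exact PA.le_self_add h
  have : S.lt (S.add z z) (S.add z z) :=
    PA.lt_of_le_of_lt' h hzz (PA.lt_of_lt_of_le' h key2 (PA.lee_trans h key3 key4))
  exact PA.lt_irrefl' h _ this

theorem pair_inj {x y a b z : S.carrier} (h1 : pairRel S x y z) (h2 : pairRel S a b z) :
    x = a ∧ y = b := by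
  have hsum : S.add x y = S.add a b := by
    rcases PA.tri h (S.add x y) (S.add a b) with hh | hh | hh
    · exact absurd (PA.pair_sum_lt_aux h h1 h2 hh) (fun q => q)
    · exact hh
    · exact absurd (PA.pair_sum_lt_aux h h2 h1 hh) (fun q => q)
  have hyy : S.add y y = S.add b b := by
    have e1 : S.add (S.add y y) (S.mul (S.add x y) (S.add (S.add x y) S.one))
        = S.add (S.add b b) (S.mul (S.add x y) (S.add (S.add x y) S.one)) := by
      unfold pairRel at h1 h2
      rw [PA.add_comm' h (S.add y y), PA.add_comm' h (S.add b b), ← h1, hsum, ← h2]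
    exact PA.cancel_eq h e1
  have hy : y = b := PA.dbl_cancel_eq h hyy
  subst hy
  have : S.add x y = S.add a y := hsum
  constructor
  · apply PA.cancel_eq h (c := y)
    exact this
  · rfl

theorem pair_total (hev : ∀ s, ∃ u, S.add u u = S.mul s (S.add s S.one)) (x y : S.carrier) :
    ∃ z, pairRel S x y z := by
  obtain ⟨u, hu⟩ := hev (S.add x y)
  refine ⟨S.add u y, ?_⟩
  unfold pairRel
  letI := PA.csr h
  show (u + y) + (u + y) = (x + y) * ((x + y) + 1) + (y + y)
  have hu' : u + u = (x + y) * ((x + y) + 1) := hu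
  calc (u + y) + (u + y) = (u + u) + (y + y) := by ring
  _ = (x + y) * ((x + y) + 1) + (y + y) := by rw [hu']

end PA

/-- `NxtRel H u y` : y is the least element of H that is ≥ u. -/
def NxtRel (S : Struct) (H : Set S.carrier) (u y : S.carrier) : Prop :=
  y ∈ H ∧ ¬ S.lt y u ∧ ∀ z, S.lt z y → (S.lt z u ∨ z ∉ H)

namespace PA

variable (h : PAminus S)
include h

theorem nxt_fun {H : Set S.carrier} {u y y' : S.carrier} (h1 : NxtRel S H u y)
    (h2 : NxtRel S H u y') : y = y' := by
  rcases PA.tri h y y' with hh | hh | hh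
  · rcases h2.2.2 y hh with hc | hc
    · exact absurd hc h1.2.1
    · exact absurd h1.1 hc
  · exact hh
  · rcases h1.2.2 y' hh with hc | hc
    · exact absurd hc h2.2.1
    · exact absurd h2.1 hc

theorem nxt_id {H : Set S.carrier} {y : S.carrier} (hy : y ∈ H) : NxtRel S H y y :=
  ⟨hy, PA.lt_irrefl' h y, fun z hz => Or.inl hz⟩

theorem nxt_min {H : Set S.carrier} {u y y' : S.carrier} (h1 : NxtRel S H u y)
    (h2 : y' ∈ H) (h3 : ¬ S.lt y' u) : ¬ S.lt y' y := by
  intro hc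
  rcases h1.2.2 y' hc with hh | hh
  · exact h3 hh
  · exact hh h2

omit h

theorem even_total {𝒳 : Set (Set S.carrier)} (h : PAminus S) (hInd : Delta0IndB S 𝒳)
    {X0 : Set S.carrier} (hX0 : X0 ∈ 𝒳) :
    ∀ s, ∃ u, S.add u u = S.mul s (S.add s S.one) := by
  classical
  set φ : Formula := .bex (.add (.mul (.var 0) (.var 0)) (.add (.var 0) .one))
      (.eq (.add (.var 0) (.var 0)) (.mul (.var 1) (.add (.var 1) .one))) with hφ
  have hsat : ∀ (a : S.carrier) (v : ℕ → S.carrier),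
      Formula.Sat S 𝒳 φ (consN a v) (fun _ => X0) ↔
      ∃ u, S.lt u (S.add (S.mul a a) (S.add a S.one)) ∧
        S.add u u = S.mul a (S.add a S.one) := by
    intro a v
    simp [hφ, Formula.Sat, Term.val]
  have hmain := hInd φ (by simp [hφ, Formula.IsDelta0]) (fun _ => S.zero) (fun _ => X0)
    (fun _ => hX0) ?base ?step
  · intro s
    obtain ⟨u, _, hu⟩ := (hsat s _).1 (hmain s)
    exact ⟨u, hu⟩
  case base =>
    rw [hsat]
    refine ⟨S.zero, ?_, ?_⟩
    · have he : S.add (S.mul S.zero S.zero) (S.add S.zero S.one) = S.one := by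
        letI := PA.csr h
        show (0 : S.carrier) * 0 + (0 + 1) = 1
        ring
      rw [he]; exact PA.zero_lt_one' h
    · letI := PA.csr h
      show (0 : S.carrier) + 0 = 0 * (0 + 1)
      ring
  case step =>
    intro a ha
    rw [hsat] at ha ⊢
    obtain ⟨u, _, hu⟩ := ha
    have heq : S.add (S.add u (S.add a S.one)) (S.add u (S.add a S.one))
        = S.mul (S.add a S.one) (S.add (S.add a S.one) S.one) := by
      letI := PA.csr h
      show (u + (a + 1)) + (u + (a + 1)) = (a + 1) * ((a + 1) + 1)
      have hu' : u + u = a * (a + 1) := hu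
      calc (u + (a+1)) + (u + (a+1)) = (u + u) + ((a+1) + (a+1)) := by ring
      _ = a * (a+1) + ((a+1) + (a+1)) := by rw [hu']
      _ = (a + 1) * ((a + 1) + 1) := by ring
    refine ⟨S.add u (S.add a S.one), ?_, heq⟩
    have hle : S.le (S.add u (S.add a S.one))
        (S.mul (S.add a S.one) (S.add (S.add a S.one) S.one)) := by
      rw [← heq]; exact PA.le_self_add h
    have heq2 : S.add (S.mul (S.add a S.one) (S.add a S.one))
        (S.add (S.add a S.one) S.one)
        = S.add (S.mul (S.add a S.one) (S.add (S.add a S.one) S.one)) S.one := by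
      letI := PA.csr h
      show (a+1) * (a+1) + ((a+1) + 1) = (a+1) * ((a+1) + 1) + 1
      ring
    rw [heq2]
    exact PA.lt_succ_le h hle

theorem nxt_total {𝒳 : Set (Set S.carrier)} (h : PAminus S) (hInd : Delta0IndB S 𝒳)
    {H : Set S.carrier} (hH : H ∈ 𝒳) (hU : Unbdd S H) :
    ∀ u, ∃ y, NxtRel S H u y := by
  classical
  intro u
  by_contra hne
  push_neg at hne
  set ψ : Formula := .ball (.var 0) (.forr (.lt (.var 0) (.var 2)) (.fneg (.mem (.var 0) 1)))
    with hψ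
  have hsat : ∀ (b : S.carrier),
      Formula.Sat S 𝒳 ψ (consN b (fun _ => u)) (fun _ => H) ↔
      ∀ z, S.lt z b → (S.lt z u ∨ z ∉ H) := by
    intro b
    simp [hψ, Formula.Sat, Term.val]
  have hmain := hInd ψ (by simp [hψ, Formula.IsDelta0]) (fun _ => u) (fun _ => H)
    (fun _ => hH) ?base ?step
  · obtain ⟨b, hbH, hub⟩ := hU u
    rcases (hsat _).1 (hmain (S.add b S.one)) b (PA.lt_succ h) with hc | hc
    · exact PA.lt_asymm' h _ _ hub hc
    · exact hc hbH
  case base =>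
    rw [hsat]
    intro z hz
    exact absurd hz (PA.notlt_zero h z)
  case step =>
    intro b hb
    rw [hsat] at hb ⊢
    intro z hz
    rcases (PA.lt_succ_iff h).1 hz with hlt | heqz
    · exact hb z hlt
    · subst heqz
      by_contra hc
      push_neg at hc
      exact hne z ⟨hc.2, hc.1, hb⟩

end PA


theorem listCode_cons {x : S.carrier} {l : List S.carrier} (hl : l ≠ []) {c : S.carrier} :
    listCode S (x :: l) c ↔ ∃ w, listCode S l w ∧ pairRel S x w c := by
  match l with
  | [] => exact absurd rfl hl
  | y :: t => exact Iff.rfl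

theorem lc_fun (h : PAminus S) :
    ∀ (l : List S.carrier) (c c' : S.carrier), listCode S l c → listCode S l c' → c = c' := by
  intro l
  induction l with
  | nil => intro c c' hc _; exact hc.elim
  | cons x t ih =>
    intro c c' hc hc'
    cases t with
    | nil => simp only [listCode] at hc hc'; rw [hc, hc']
    | cons y u =>
      obtain ⟨w, hw, hp⟩ := hc
      obtain ⟨w', hw', hp'⟩ := hc'
      have hww : w = w' := ih w w' hw hw'
      subst hww
      exact PA.pair_fun h hp hp'

theorem lc_total (h : PAminus S)
    (hev : ∀ s, ∃ u, S.add u u = S.mul s (S.add s S.one)) :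
    ∀ l : List S.carrier, l ≠ [] → ∃ c, listCode S l c := by
  intro l
  induction l with
  | nil => intro hl; exact absurd rfl hl
  | cons x t ih =>
    intro _
    cases t with
    | nil => exact ⟨x, rfl⟩
    | cons y u =>
      obtain ⟨w, hw⟩ := ih (by simp)
      obtain ⟨c, hc⟩ := PA.pair_total h hev x w
      exact ⟨c, ⟨w, hw, hc⟩⟩

/-- Convert a list to a tuple (with default `0`). -/
def tup (S : Struct) (n : ℕ) (l : List S.carrier) : Fin n → S.carrier :=
  fun j => l.getD j S.zero

theorem ofFn_tup {n : ℕ} {l : List S.carrier} (hl : l.length = n) :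
    List.ofFn (tup S n l) = l := by
  apply List.ext_getElem (by simp [hl])
  intro i h1 h2
  simp only [List.getElem_ofFn, tup]
  exact List.getD_eq_getElem l S.zero h2

theorem tup_ofFn {n : ℕ} (x : Fin n → S.carrier) : tup S n (List.ofFn x) = x := by
  funext j
  simp only [tup]
  have hj : (j : ℕ) < (List.ofFn x).length := by simp
  rw [List.getD_eq_getElem _ _ hj]
  simp

theorem chain'_of_chain {R : S.carrier → S.carrier → Prop} {a : S.carrier}
    {l : List S.carrier} (hc : List.Chain R a l) : List.Chain' R l := by
  cases l with
  | nil => exact List.IsChain.nil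
  | cons x t => exact (List.chain_cons.1 hc).2

theorem chain_of_le_chain (h : PAminus S) {a b : S.carrier} {l : List S.carrier}
    (hab : S.le a b) (hc : List.Chain S.lt b l) : List.Chain S.lt a l := by
  cases l with
  | nil => exact List.Chain.nil
  | cons x t =>
    rcases List.chain_cons.1 hc with ⟨h1, h2⟩
    exact List.chain_cons.2 ⟨PA.lt_of_le_of_lt' h hab h1, h2⟩

theorem incr_iff_chain (h : PAminus S) {n : ℕ} (x : Fin n → S.carrier) :
    Incr S x ↔ List.Chain' S.lt (List.ofFn x) := by
  letI : IsTrans S.carrier S.lt := ⟨fun a b c => PA.lt_trans' h a b c⟩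
  rw [List.Chain', List.isChain_iff_pairwise, List.pairwise_ofFn]
  constructor
  · intro hx i j hij; exact hx i j hij
  · intro hx i j hij; exact hx hij

theorem exists_chain_list (h : PAminus S) {H : Set S.carrier} (hU : Unbdd S H) :
    ∀ (n : ℕ) (a : S.carrier), ∃ l : List S.carrier,
      l.length = n ∧ List.Chain S.lt a l ∧ ∀ x ∈ l, x ∈ H := by
  intro n
  induction n with
  | zero => exact fun a => ⟨[], rfl, List.Chain.nil, by simp⟩
  | succ n ih =>
    intro a
    obtain ⟨b, hbH, hab⟩ := hU a
    obtain ⟨l, hl1, hl2, hl3⟩ := ih b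
    refine ⟨b :: l, by simp [hl1], List.chain_cons.2 ⟨hab, hl2⟩, ?_⟩
    intro x hx
    rcases List.mem_cons.1 hx with rfl | hx
    · exact hbH
    · exact hl3 x hx

theorem exists_incr_tuple (h : PAminus S) {H : Set S.carrier} (hU : Unbdd S H) (n : ℕ) :
    ∃ x : Fin n → S.carrier, Incr S x ∧ ∀ j, x j ∈ H := by
  obtain ⟨l, hl1, hl2, hl3⟩ := exists_chain_list h hU n S.zero
  refine ⟨tup S n l, ?_, ?_⟩
  · rw [incr_iff_chain h, ofFn_tup hl1]
    exact chain'_of_chain hl2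
  · intro j
    apply hl3
    have hj : (j : ℕ) < l.length := by rw [hl1]; exact j.2
    rw [tup, List.getD_eq_getElem _ _ hj]
    exact List.getElem_mem hj


@[simp] theorem consN_add2 {α : Sort*} (a b : α) (v : ℕ → α) (i : ℕ) :
    consN a (consN b v) (i+2) = v i := rfl
@[simp] theorem consN_add3 {α : Sort*} (a b c : α) (v : ℕ → α) (i : ℕ) :
    consN a (consN b (consN c v)) (i+3) = v i := rfl
@[simp] theorem consN_add4 {α : Sort*} (a b c d : α) (v : ℕ → α) (i : ℕ) :
    consN a (consN b (consN c (consN d v))) (i+4) = v i := rfl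

/-- Numeral terms. -/
def numT : ℕ → Term
  | 0 => .zero
  | r+1 => .add (numT r) .one

@[simp] theorem numT_val {v : ℕ → S.carrier} : ∀ r, (numT r).val S v = ofNat S r
  | 0 => rfl
  | r+1 => by simp only [numT, Term.val, numT_val (v := v) r]; rfl

def pairT (t1 t2 t3 : Term) : Formula :=
  .eq (.add t3 t3) (.add (.mul (.add t1 t2) (.add (.add t1 t2) .one)) (.add t2 t2))

@[simp] theorem pairT_sat {𝒳 : Set (Set S.carrier)} {V : ℕ → Set S.carrier}
    {v : ℕ → S.carrier} {t1 t2 t3 : Term} :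
    Formula.Sat S 𝒳 (pairT t1 t2 t3) v V ↔
      pairRel S (t1.val S v) (t2.val S v) (t3.val S v) := by
  simp [pairT, Formula.Sat, Term.val, pairRel]

@[simp] theorem pairT_delta0 {t1 t2 t3 : Term} : (pairT t1 t2 t3).IsDelta0 := trivial

/-- Semantic decoding chain. -/
def DecS (S : Struct) (L : S.carrier → S.carrier → Prop)
    (St : S.carrier → S.carrier → S.carrier → Prop) :
    ℕ → S.carrier → S.carrier → S.carrier → S.carrier → Prop
  | 0, _, _, c, c' => L c c'
  | m+1, px, py, c, c' => ∃ x w y w', pairRel S x w c ∧ S.lt px x ∧ St py x y ∧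
      DecS S L St m x y w w' ∧ pairRel S y w' c'

def TopS (S : Struct) (L : S.carrier → S.carrier → Prop)
    (St0 : S.carrier → S.carrier → Prop)
    (St : S.carrier → S.carrier → S.carrier → Prop) (m : ℕ) (c c' : S.carrier) : Prop :=
  ∃ x w y w', pairRel S x w c ∧ St0 x y ∧ DecS S L St m x y w w' ∧ pairRel S y w' c'

def decF (last : ℕ → ℕ → Formula) (step : ℕ → ℕ → ℕ → Formula) :
    ℕ → ℕ → ℕ → ℕ → ℕ → Formula
  | 0, ic, ic', _, _ => last ic ic'
  | m+1, ic, ic', ipx, ipy =>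
    .bex (.add (.var ic) .one) <| .bex (.add (.var (ic+1)) .one) <|
    .bex (.add (.var (ic'+2)) .one) <| .bex (.add (.var (ic'+3)) .one) <|
    (pairT (.var 3) (.var 2) (.var (ic+4))).fand <|
    (Formula.lt (.var (ipx+4)) (.var 3)).fand <|
    (step (ipy+4) 3 1).fand <|
    (decF last step m 2 0 3 1).fand (pairT (.var 1) (.var 0) (.var (ic'+4)))

def topF (last : ℕ → ℕ → Formula) (step0 : ℕ → ℕ → Formula) (step : ℕ → ℕ → ℕ → Formula)
    (m : ℕ) (ic ic' : ℕ) : Formula :=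
  .bex (.add (.var ic) .one) <| .bex (.add (.var (ic+1)) .one) <|
  .bex (.add (.var (ic'+2)) .one) <| .bex (.add (.var (ic'+3)) .one) <|
  (pairT (.var 3) (.var 2) (.var (ic+4))).fand <|
  (step0 3 1).fand <|
  (decF last step m 2 0 3 1).fand (pairT (.var 1) (.var 0) (.var (ic'+4)))

section DecSat

variable {𝒳 : Set (Set S.carrier)} {V : ℕ → Set S.carrier}
variable {last : ℕ → ℕ → Formula} {step : ℕ → ℕ → ℕ → Formula} {step0 : ℕ → ℕ → Formula}
variable {L : S.carrier → S.carrier → Prop} {St : S.carrier → S.carrier → S.carrier → Prop}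
variable {St0 : S.carrier → S.carrier → Prop}

theorem decF_sat (h : PAminus S)
    (hlast : ∀ (v : ℕ → S.carrier) (i j : ℕ), Formula.Sat S 𝒳 (last i j) v V ↔ L (v i) (v j))
    (hstep : ∀ (v : ℕ → S.carrier) (i j l : ℕ),
      Formula.Sat S 𝒳 (step i j l) v V ↔ St (v i) (v j) (v l)) :
    ∀ (m : ℕ) (ic ic' ipx ipy : ℕ) (v : ℕ → S.carrier),
      Formula.Sat S 𝒳 (decF last step m ic ic' ipx ipy) v V ↔
        DecS S L St m (v ipx) (v ipy) (v ic) (v ic') := by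
  intro m
  induction m with
  | zero => intro ic ic' ipx ipy v; exact hlast v ic ic'
  | succ m ih =>
    intro ic ic' ipx ipy v
    constructor
    · rintro ⟨x, -, w, -, y, -, w', -, hp1, hpx, hst, hdec, hp2⟩
      exact ⟨x, w, y, w', pairT_sat.1 hp1, hpx, (hstep _ _ _ _).1 hst,
        (ih 2 0 3 1 _).1 hdec, pairT_sat.1 hp2⟩
    · rintro ⟨x, w, y, w', hp1, hpx, hst, hdec, hp2⟩
      exact ⟨x, PA.lt_succ_le h (PA.pair_bound h hp1).1,
        w, PA.lt_succ_le h (PA.pair_bound h hp1).2,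
        y, PA.lt_succ_le h (PA.pair_bound h hp2).1,
        w', PA.lt_succ_le h (PA.pair_bound h hp2).2,
        pairT_sat.2 hp1, hpx, (hstep _ _ _ _).2 hst, (ih 2 0 3 1 _).2 hdec, pairT_sat.2 hp2⟩

theorem topF_sat (h : PAminus S)
    (hlast : ∀ (v : ℕ → S.carrier) (i j : ℕ), Formula.Sat S 𝒳 (last i j) v V ↔ L (v i) (v j))
    (hstep : ∀ (v : ℕ → S.carrier) (i j l : ℕ),
      Formula.Sat S 𝒳 (step i j l) v V ↔ St (v i) (v j) (v l))
    (hstep0 : ∀ (v : ℕ → S.carrier) (i j : ℕ),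
      Formula.Sat S 𝒳 (step0 i j) v V ↔ St0 (v i) (v j)) :
    ∀ (m : ℕ) (ic ic' : ℕ) (v : ℕ → S.carrier),
      Formula.Sat S 𝒳 (topF last step0 step m ic ic') v V ↔
        TopS S L St0 St m (v ic) (v ic') := by
  intro m ic ic' v
  constructor
  · rintro ⟨x, -, w, -, y, -, w', -, hp1, hst0, hdec, hp2⟩
    exact ⟨x, w, y, w', pairT_sat.1 hp1, (hstep0 _ _ _).1 hst0,
      (decF_sat h hlast hstep m 2 0 3 1 _).1 hdec, pairT_sat.1 hp2⟩
  · rintro ⟨x, w, y, w', hp1, hst0, hdec, hp2⟩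
    exact ⟨x, PA.lt_succ_le h (PA.pair_bound h hp1).1,
      w, PA.lt_succ_le h (PA.pair_bound h hp1).2,
      y, PA.lt_succ_le h (PA.pair_bound h hp2).1,
      w', PA.lt_succ_le h (PA.pair_bound h hp2).2,
      pairT_sat.2 hp1, (hstep0 _ _ _).2 hst0,
      (decF_sat h hlast hstep m 2 0 3 1 _).2 hdec, pairT_sat.2 hp2⟩

theorem decF_delta0 (hlast : ∀ i j, (last i j).IsDelta0)
    (hstep : ∀ i j l, (step i j l).IsDelta0) :
    ∀ (m ic ic' ipx ipy : ℕ), (decF last step m ic ic' ipx ipy).IsDelta0 := by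
  intro m
  induction m with
  | zero => intro ic ic' ipx ipy; exact hlast ic ic'
  | succ m ih =>
    intro ic ic' ipx ipy
    exact ⟨trivial, trivial, hstep _ _ _, ih 2 0 3 1, trivial⟩

theorem topF_delta0 (hlast : ∀ i j, (last i j).IsDelta0)
    (hstep : ∀ i j l, (step i j l).IsDelta0)
    (hstep0 : ∀ i j, (step0 i j).IsDelta0) :
    ∀ (m ic ic' : ℕ), (topF last step0 step m ic ic').IsDelta0 := by
  intro m ic ic'
  exact ⟨trivial, hstep0 _ _, decF_delta0 hlast hstep m 2 0 3 1, trivial⟩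

end DecSat

/-! Concrete step and base formulas. -/

def uTerm (iu : ℕ) (p : Bool) : Term := if p then .add (.var iu) .one else .var iu

def uVal (S : Struct) (p : Bool) (u : S.carrier) : S.carrier :=
  if p then S.add u S.one else u

@[simp] theorem uTerm_val {v : ℕ → S.carrier} {iu : ℕ} {p : Bool} :
    (uTerm iu p).val S v = uVal S p (v iu) := by
  cases p <;> simp [uTerm, uVal, Term.val]

def nxtF (iu : ℕ) (p : Bool) (iy : ℕ) : Formula :=
  (Formula.mem (.var iy) 1).fand <|
  (Formula.fneg (.lt (.var iy) (uTerm iu p))).fand <|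
  .ball (.var iy) ((Formula.lt (.var 0) (uTerm (iu+1) p)).forr (.fneg (.mem (.var 0) 1)))

@[simp] theorem nxtF_sat {𝒳 : Set (Set S.carrier)} {V : ℕ → Set S.carrier}
    {v : ℕ → S.carrier} {iu : ℕ} {p : Bool} {iy : ℕ} :
    Formula.Sat S 𝒳 (nxtF iu p iy) v V ↔ NxtRel S (V 1) (uVal S p (v iu)) (v iy) := by
  cases p <;> simp [nxtF, Formula.Sat, Term.val, NxtRel, uTerm, uVal]

@[simp] theorem nxtF_delta0 {iu : ℕ} {p : Bool} {iy : ℕ} : (nxtF iu p iy).IsDelta0 :=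
  ⟨trivial, trivial, trivial, trivial⟩

def stepPushF (ipy ix iy : ℕ) : Formula :=
  ((Formula.lt (.var ipy) (.var ix)).forr (nxtF ipy true iy)).fand
  ((Formula.fneg (.lt (.var ipy) (.var ix))).forr (nxtF ix false iy))

def StPush (S : Struct) (H : Set S.carrier) (py x y : S.carrier) : Prop :=
  (S.lt py x ∨ NxtRel S H (S.add py S.one) y) ∧ (¬ S.lt py x ∨ NxtRel S H x y)

@[simp] theorem stepPushF_sat {𝒳 : Set (Set S.carrier)} {V : ℕ → Set S.carrier}
    {v : ℕ → S.carrier} {ipy ix iy : ℕ} :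
    Formula.Sat S 𝒳 (stepPushF ipy ix iy) v V ↔ StPush S (V 1) (v ipy) (v ix) (v iy) := by
  simp [stepPushF, Formula.Sat, Term.val, StPush, uVal, NxtRel]

@[simp] theorem stepPushF_delta0 {ipy ix iy : ℕ} : (stepPushF ipy ix iy).IsDelta0 :=
  ⟨⟨trivial, nxtF_delta0⟩, ⟨trivial, nxtF_delta0⟩⟩

def stepIdF (_ ix iy : ℕ) : Formula := .eq (.var ix) (.var iy)

def StId (S : Struct) : S.carrier → S.carrier → S.carrier → Prop := fun _ x y => x = y

@[simp] theorem stepIdF_sat {𝒳 : Set (Set S.carrier)} {V : ℕ → Set S.carrier}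
    {v : ℕ → S.carrier} {ipy ix iy : ℕ} :
    Formula.Sat S 𝒳 (stepIdF ipy ix iy) v V ↔ StId S (v ipy) (v ix) (v iy) := by
  simp [stepIdF, Formula.Sat, Term.val, StId]

def step0PushF (ix iy : ℕ) : Formula := nxtF ix false iy

def step0IdF (ix iy : ℕ) : Formula := .eq (.var ix) (.var iy)

def St0Push (S : Struct) (H : Set S.carrier) (x y : S.carrier) : Prop := NxtRel S H x y

def St0Id (S : Struct) : S.carrier → S.carrier → Prop := fun x y => x = y

@[simp] theorem step0PushF_sat {𝒳 : Set (Set S.carrier)} {V : ℕ → Set S.carrier}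
    {v : ℕ → S.carrier} {ix iy : ℕ} :
    Formula.Sat S 𝒳 (step0PushF ix iy) v V ↔ St0Push S (V 1) (v ix) (v iy) := by
  simp [step0PushF, St0Push, uVal]

@[simp] theorem step0IdF_sat {𝒳 : Set (Set S.carrier)} {V : ℕ → Set S.carrier}
    {v : ℕ → S.carrier} {ix iy : ℕ} :
    Formula.Sat S 𝒳 (step0IdF ix iy) v V ↔ St0Id S (v ix) (v iy) := by
  simp [step0IdF, Formula.Sat, Term.val, St0Id]

def lastLtF (r : ℕ) (ic ic' : ℕ) : Formula :=
  (Formula.lt (.var ic) (numT r)).fand (.eq (.var ic') (.var ic))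

def LLt (S : Struct) (r : ℕ) (c c' : S.carrier) : Prop := S.lt c (ofNat S r) ∧ c' = c

def lastEqF (r r' : ℕ) (ic ic' : ℕ) : Formula :=
  (Formula.eq (.var ic) (numT r)).fand (.eq (.var ic') (numT r'))

def LEq (S : Struct) (r r' : ℕ) (c c' : S.carrier) : Prop :=
  c = ofNat S r ∧ c' = ofNat S r'

def last01F (ic ic' : ℕ) : Formula :=
  ((Formula.eq (.var ic) (numT 0)).forr (.eq (.var ic) (numT 1))).fand
    (.eq (.var ic') (.var ic))

def L01 (S : Struct) (c c' : S.carrier) : Prop :=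
  (c = ofNat S 0 ∨ c = ofNat S 1) ∧ c' = c

@[simp] theorem lastLtF_sat {𝒳 : Set (Set S.carrier)} {V : ℕ → Set S.carrier}
    {v : ℕ → S.carrier} {r ic ic' : ℕ} :
    Formula.Sat S 𝒳 (lastLtF r ic ic') v V ↔ LLt S r (v ic) (v ic') := by
  simp [lastLtF, Formula.Sat, Term.val, LLt]

@[simp] theorem lastEqF_sat {𝒳 : Set (Set S.carrier)} {V : ℕ → Set S.carrier}
    {v : ℕ → S.carrier} {r r' ic ic' : ℕ} :
    Formula.Sat S 𝒳 (lastEqF r r' ic ic') v V ↔ LEq S r r' (v ic) (v ic') := by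
  simp [lastEqF, Formula.Sat, Term.val, LEq]

@[simp] theorem last01F_sat {𝒳 : Set (Set S.carrier)} {V : ℕ → Set S.carrier}
    {v : ℕ → S.carrier} {ic ic' : ℕ} :
    Formula.Sat S 𝒳 (last01F ic ic') v V ↔ L01 S (v ic) (v ic') := by
  simp [last01F, Formula.Sat, Term.val, L01, ofNat]

/-! Push chains. -/

def PCh (St : S.carrier → S.carrier → S.carrier → Prop) :
    S.carrier → List S.carrier → List S.carrier → Prop
  | _, [], [] => True
  | py, x :: xs, y :: ys => St py x y ∧ PCh St y xs ys
  | _, _, _ => False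

def PCh0 (St0 : S.carrier → S.carrier → Prop)
    (St : S.carrier → S.carrier → S.carrier → Prop) :
    List S.carrier → List S.carrier → Prop
  | [], [] => True
  | x :: xs, y :: ys => St0 x y ∧ PCh St y xs ys
  | _, _ => False

theorem pch_len {St : S.carrier → S.carrier → S.carrier → Prop} :
    ∀ {xs ys : List S.carrier} {py}, PCh St py xs ys → ys.length = xs.length
  | [], [], _, _ => rfl
  | [], _ :: _, _, hp => hp.elim
  | _ :: _, [], _, hp => hp.elim
  | _ :: xs, _ :: ys, _, hp => by simp [pch_len hp.2]

theorem pch_fun {St : S.carrier → S.carrier → S.carrier → Prop}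
    (hfun : ∀ py x y y', St py x y → St py x y' → y = y') :
    ∀ {xs ys ys' : List S.carrier} {py}, PCh St py xs ys → PCh St py xs ys' → ys = ys' := by
  intro xs
  induction xs with
  | nil =>
    intro ys ys' py hp hp'
    cases ys with
    | nil => cases ys' with
      | nil => rfl
      | cons b bs => exact hp'.elim
    | cons a as => exact hp.elim
  | cons x xs ih =>
    intro ys ys' py hp hp'
    cases ys with
    | nil => exact hp.elim
    | cons y ys => cases ys' with
      | nil => exact hp'.elim
      | cons y' ys' =>
        obtain ⟨h1, h2⟩ := hp
        obtain ⟨h1', h2'⟩ := hp'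
        have hy : y = y' := hfun _ _ _ _ h1 h1'
        subst hy
        rw [ih h2 h2']

theorem pch_total {St : S.carrier → S.carrier → S.carrier → Prop}
    (htot : ∀ py x, ∃ y, St py x y) :
    ∀ (xs : List S.carrier) (py), ∃ ys, PCh St py xs ys := by
  intro xs
  induction xs with
  | nil => exact fun py => ⟨[], trivial⟩
  | cons x xs ih =>
    intro py
    obtain ⟨y, hy⟩ := htot py x
    obtain ⟨ys, hys⟩ := ih y
    exact ⟨y :: ys, hy, hys⟩

theorem pch_id : ∀ {xs ys : List S.carrier} {py}, PCh (StId S) py xs ys ↔ ys = xs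
  | [], [], _ => by simp [PCh]
  | [], _ :: _, _ => by simp [PCh]
  | _ :: _, [], _ => by simp [PCh]
  | x :: xs, y :: ys, py => by
    rw [show PCh (StId S) py (x :: xs) (y :: ys) = (StId S py x y ∧ PCh (StId S) y xs ys)
      from rfl, pch_id]
    constructor
    · rintro ⟨rfl, rfl⟩; rfl
    · rintro hh
      injection hh with h1 h2
      exact ⟨h1.symm, by rw [h2]⟩

theorem spush_lt (h : PAminus S) {H : Set S.carrier} {py x y : S.carrier}
    (hs : StPush S H py x y) : S.lt py y := by
  by_cases hc : S.lt py x
  · rcases hs.2 with hn | hn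
    · exact absurd hc hn
    · exact PA.lt_of_lt_of_le' h hc (PA.lee_of_not_lt h hn.2.1)
  · rcases hs.1 with hn | hn
    · exact absurd hn hc
    · exact PA.lt_of_lt_of_le' h (PA.lt_succ h) (PA.lee_of_not_lt h hn.2.1)

theorem spush_mem {H : Set S.carrier} {py x y : S.carrier}
    (hs : StPush S H py x y) : y ∈ H := by
  by_cases hc : S.lt py x
  · rcases hs.2 with hn | hn
    · exact absurd hc hn
    · exact hn.1
  · rcases hs.1 with hn | hn
    · exact absurd hn hc
    · exact hn.1

theorem spush_fun (h : PAminus S) {H : Set S.carrier} {py x y y' : S.carrier}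
    (h1 : StPush S H py x y) (h2 : StPush S H py x y') : y = y' := by
  by_cases hc : S.lt py x
  · rcases h1.2 with hn | hn
    · exact absurd hc hn
    rcases h2.2 with hn' | hn'
    · exact absurd hc hn'
    exact PA.nxt_fun h hn hn'
  · rcases h1.1 with hn | hn
    · exact absurd hn hc
    rcases h2.1 with hn' | hn'
    · exact absurd hn' hc
    exact PA.nxt_fun h hn hn'

theorem spush_total {H : Set S.carrier}
    (hNx : ∀ u, ∃ y, NxtRel S H u y) (py x : S.carrier) : ∃ y, StPush S H py x y := by
  by_cases hc : S.lt py x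
  · obtain ⟨y, hy⟩ := hNx x
    exact ⟨y, Or.inl hc, Or.inr hy⟩
  · obtain ⟨y, hy⟩ := hNx (S.add py S.one)
    exact ⟨y, Or.inr hy, Or.inl hc⟩

theorem spush_id (h : PAminus S) {H : Set S.carrier} {py x : S.carrier}
    (hx : x ∈ H) (hlt : S.lt py x) : StPush S H py x x :=
  ⟨Or.inl hlt, Or.inr (PA.nxt_id h hx)⟩

theorem pch_chain_mem (h : PAminus S) {H : Set S.carrier} :
    ∀ {xs ys : List S.carrier} {py}, PCh (StPush S H) py xs ys →
      List.Chain S.lt py ys ∧ ∀ y ∈ ys, y ∈ H := by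
  intro xs
  induction xs with
  | nil =>
    intro ys py hp
    cases ys with
    | nil => exact ⟨List.Chain.nil, by simp⟩
    | cons a as => exact hp.elim
  | cons x xs ih =>
    intro ys py hp
    cases ys with
    | nil => exact hp.elim
    | cons y ys =>
      obtain ⟨h1, h2⟩ := hp
      obtain ⟨hc, hm⟩ := ih h2
      refine ⟨List.chain_cons.2 ⟨spush_lt h h1, hc⟩, ?_⟩
      intro z hz
      rcases List.mem_cons.1 hz with rfl | hz
      · exact spush_mem h1
      · exact hm z hz

theorem pch_of_self (h : PAminus S) {H : Set S.carrier} :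
    ∀ {xs : List S.carrier} {py}, (∀ x ∈ xs, x ∈ H) → List.Chain S.lt py xs →
      PCh (StPush S H) py xs xs := by
  intro xs
  induction xs with
  | nil => exact fun _ _ => trivial
  | cons x xs ih =>
    intro py hmem hch
    rcases List.chain_cons.1 hch with ⟨h1, h2⟩
    exact ⟨spush_id h (hmem x (by simp)) h1, ih (fun z hz => hmem z (by simp [hz])) h2⟩

theorem pull_aux (h : PAminus S) {H H2 : Set S.carrier} :
    ∀ {xs ys : List S.carrier} {y0 : S.carrier},
      List.Forall₂ (fun x y => x ∈ H2 ∧ NxtRel S H x y) xs ys →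
      List.Chain S.lt y0 ys → y0 ∈ H →
      PCh (StPush S H) y0 xs ys ∧ List.Chain S.lt y0 xs := by
  intro xs ys y0 hf
  induction hf generalizing y0 with
  | nil => exact fun _ _ => ⟨trivial, List.Chain.nil⟩
  | @cons x y xs ys hxy htail ih =>
    intro hch hy0
    rcases List.chain_cons.1 hch with ⟨hy0y, hchain⟩
    have hy0x : S.lt y0 x := by
      by_contra hn
      exact PA.nxt_min h hxy.2 hy0 hn hy0y
    obtain ⟨hpch, hchainx⟩ := ih hchain hxy.2.1
    refine ⟨⟨⟨Or.inl hy0x, Or.inr hxy.2⟩, hpch⟩, ?_⟩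
    exact List.chain_cons.2 ⟨hy0x, chain_of_le_chain h (PA.lee_of_not_lt h hxy.2.2.1) hchainx⟩

/-! Decoding vs list codes. -/

theorem decS_iff (h : PAminus S) {L : S.carrier → S.carrier → Prop}
    {St : S.carrier → S.carrier → S.carrier → Prop} :
    ∀ (xs : List S.carrier) (e w px py w' : S.carrier), listCode S (xs ++ [e]) w →
      (DecS S L St xs.length px py w w' ↔
        (List.Chain S.lt px xs ∧
          ∃ ys e', PCh St py xs ys ∧ listCode S (ys ++ [e']) w' ∧ L e e')) := by
  intro xs
  induction xs with
  | nil =>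
    intro e w px py w' hw
    have hwe : w = e := hw
    subst hwe
    constructor
    · intro hL
      exact ⟨List.Chain.nil, [], w', trivial, rfl, hL⟩
    · rintro ⟨-, ys, e', hpch, hlc, hLe⟩
      cases ys with
      | nil =>
        have : w' = e' := hlc
        rw [this]
        exact hLe
      | cons a as => exact hpch.elim
  | cons x xs ih =>
    intro e w px py w' hw
    obtain ⟨u, hu, hpu⟩ := (listCode_cons (by simp)).1 hw
    constructor
    · rintro ⟨x0, w0, y, ww', hp, hpx, hst, hdec, hp'⟩
      obtain ⟨rfl, rfl⟩ := PA.pair_inj h hp hpu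
      obtain ⟨hch, ys, e', hpch, hlc, hLe⟩ := (ih e w0 x0 y ww' hu).1 hdec
      refine ⟨List.chain_cons.2 ⟨hpx, hch⟩, y :: ys, e', ⟨hst, hpch⟩, ?_, hLe⟩
      exact (listCode_cons (by simp)).2 ⟨ww', hlc, hp'⟩
    · rintro ⟨hch, ys, e', hpch, hlc, hLe⟩
      cases ys with
      | nil => exact hpch.elim
      | cons y ys =>
        obtain ⟨hst, hpch'⟩ := hpch
        obtain ⟨ww', hlc', hp'⟩ := (listCode_cons (by simp)).1 hlc
        rcases List.chain_cons.1 hch with ⟨hpx, hch'⟩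
        exact ⟨x, u, y, ww', hpu, hpx, hst,
          (ih e u x y ww' hu).2 ⟨hch', ys, e', hpch', hlc', hLe⟩, hp'⟩

theorem topS_iff (h : PAminus S) {L : S.carrier → S.carrier → Prop}
    {St0 : S.carrier → S.carrier → Prop}
    {St : S.carrier → S.carrier → S.carrier → Prop}
    {x : S.carrier} {xs : List S.carrier} {e c c' : S.carrier}
    (hlc : listCode S ((x :: xs) ++ [e]) c) :
    TopS S L St0 St xs.length c c' ↔
      (List.Chain S.lt x xs ∧
        ∃ ys e', PCh0 St0 St (x :: xs) ys ∧ listCode S (ys ++ [e']) c' ∧ L e e') := by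
  obtain ⟨u, hu, hpu⟩ := (listCode_cons (by simp)).1 hlc
  constructor
  · rintro ⟨x0, w0, y, w', hp, hst0, hdec, hp'⟩
    obtain ⟨rfl, rfl⟩ := PA.pair_inj h hp hpu
    obtain ⟨hch, ys, e', hpch, hlc', hLe⟩ := (decS_iff h xs e w0 x0 y w' hu).1 hdec
    refine ⟨hch, y :: ys, e', ⟨hst0, hpch⟩, ?_, hLe⟩
    exact (listCode_cons (by simp)).2 ⟨w', hlc', hp'⟩
  · rintro ⟨hch, ys, e', hpch, hlc', hLe⟩
    cases ys with
    | nil => exact hpch.elim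
    | cons y ys =>
      obtain ⟨hst0, hpch'⟩ := hpch
      obtain ⟨w', hlc'', hp'⟩ := (listCode_cons (by simp)).1 hlc'
      exact ⟨x, u, y, w', hpu, hst0,
        (decS_iff h xs e u x y w' hu).2 ⟨hch, ys, e', hpch', hlc'', hLe⟩, hp'⟩

theorem decS_extract {L : S.carrier → S.carrier → Prop}
    {St : S.carrier → S.carrier → S.carrier → Prop} :
    ∀ (m : ℕ) (px py w w' : S.carrier), DecS S L St m px py w w' →
      ∃ (xs : List S.carrier) (e : S.carrier), xs.length = m ∧ listCode S (xs ++ [e]) w := by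
  intro m
  induction m with
  | zero => exact fun px py w w' _ => ⟨[], w, rfl, rfl⟩
  | succ m ih =>
    rintro px py w w' ⟨x, w0, y, ww', hp, -, -, hdec, -⟩
    obtain ⟨xs, e, hlen, hlc⟩ := ih x y w0 ww' hdec
    exact ⟨x :: xs, e, by simp [hlen], (listCode_cons (by simp)).2 ⟨w0, hlc, hp⟩⟩

theorem topS_extract {L : S.carrier → S.carrier → Prop}
    {St0 : S.carrier → S.carrier → Prop}
    {St : S.carrier → S.carrier → S.carrier → Prop}
    {m : ℕ} {c c' : S.carrier} (ht : TopS S L St0 St m c c') :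
    ∃ (x : S.carrier) (xs : List S.carrier) (e : S.carrier),
      xs.length = m ∧ listCode S ((x :: xs) ++ [e]) c := by
  obtain ⟨x, w, y, w', hp, -, hdec, -⟩ := ht
  obtain ⟨xs, e, hlen, hlc⟩ := decS_extract m x y w w' hdec
  exact ⟨x, xs, e, hlen, (listCode_cons (by simp)).2 ⟨w, hlc, hp⟩⟩


/-! Helpers for `PCh0`. -/

theorem pch0_id : ∀ {xs ys : List S.carrier}, PCh0 (St0Id S) (StId S) xs ys ↔ ys = xs
  | [], [] => by simp [PCh0]
  | [], _ :: _ => by simp [PCh0]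
  | _ :: _, [] => by simp [PCh0]
  | x :: xs, y :: ys => by
    rw [show PCh0 (St0Id S) (StId S) (x :: xs) (y :: ys)
        = (St0Id S x y ∧ PCh (StId S) y xs ys) from rfl, pch_id]
    constructor
    · rintro ⟨rfl, rfl⟩; rfl
    · rintro hh
      injection hh with h1 h2
      exact ⟨h1.symm, by rw [h2]⟩

theorem pch0_fun (h : PAminus S) {H : Set S.carrier} {xs ys ys' : List S.carrier}
    (h1 : PCh0 (St0Push S H) (StPush S H) xs ys) (h2 : PCh0 (St0Push S H) (StPush S H) xs ys') :
    ys = ys' := by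
  cases xs with
  | nil =>
    cases ys with
    | nil => cases ys' with
      | nil => rfl
      | cons b bs => exact h2.elim
    | cons a as => exact h1.elim
  | cons x xs =>
    cases ys with
    | nil => exact h1.elim
    | cons y ys => cases ys' with
      | nil => exact h2.elim
      | cons y' ys' =>
        have hy : y = y' := PA.nxt_fun h h1.1 h2.1
        subst hy
        rw [pch_fun (St := StPush S H) (fun _ _ _ _ ha hb => spush_fun h ha hb) h1.2 h2.2]

theorem pch0_total {H : Set S.carrier} (hNx : ∀ u, ∃ y, NxtRel S H u y) :
    ∀ xs : List S.carrier, ∃ ys, PCh0 (St0Push S H) (StPush S H) xs ys := by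
  intro xs
  cases xs with
  | nil => exact ⟨[], trivial⟩
  | cons x xs =>
    obtain ⟨y, hy⟩ := hNx x
    obtain ⟨ys, hys⟩ := pch_total (spush_total hNx) xs y
    exact ⟨y :: ys, hy, hys⟩

theorem pch0_len {H : Set S.carrier} :
    ∀ {xs ys : List S.carrier}, PCh0 (St0Push S H) (StPush S H) xs ys →
      ys.length = xs.length
  | [], [], _ => rfl
  | [], _ :: _, hp => hp.elim
  | _ :: _, [], hp => hp.elim
  | _ :: xs, _ :: ys, hp => by simp [pch_len hp.2]

theorem pch0_chain_mem (h : PAminus S) {H : Set S.carrier} {xs ys : List S.carrier}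
    (hp : PCh0 (St0Push S H) (StPush S H) xs ys) :
    List.Chain' S.lt ys ∧ ∀ y ∈ ys, y ∈ H := by
  cases xs with
  | nil =>
    cases ys with
    | nil => exact ⟨List.IsChain.nil, by simp⟩
    | cons a as => exact hp.elim
  | cons x xs =>
    cases ys with
    | nil => exact hp.elim
    | cons y ys =>
      obtain ⟨hc, hm⟩ := pch_chain_mem h hp.2
      refine ⟨List.isChain_cons.2 ⟨?_, chain'_of_chain hc⟩, ?_⟩
      · intro z hz
        cases ys with
        | nil => simp at hz
        | cons b bs =>
          simp only [List.head?_cons, Option.mem_some_iff] at hz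
          subst hz
          exact (List.chain_cons.1 hc).1
      · intro z hz
        rcases List.mem_cons.1 hz with rfl | hz
        · exact hp.1.1
        · exact hm z hz

theorem pch0_of_self (h : PAminus S) {H : Set S.carrier} {xs : List S.carrier}
    (hmem : ∀ x ∈ xs, x ∈ H) (hch : List.Chain' S.lt xs) :
    PCh0 (St0Push S H) (StPush S H) xs xs := by
  cases xs with
  | nil => exact trivial
  | cons x xs =>
    exact ⟨PA.nxt_id h (hmem x (by simp)),
      pch_of_self h (fun z hz => hmem z (by simp [hz])) hch⟩

theorem pch0_pull (h : PAminus S) {H H2 : Set S.carrier} {xs ys : List S.carrier}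
    (hf : List.Forall₂ (fun x y => x ∈ H2 ∧ NxtRel S H x y) xs ys)
    (hch : List.Chain' S.lt ys) :
    PCh0 (St0Push S H) (StPush S H) xs ys ∧ List.Chain' S.lt xs := by
  cases hf with
  | nil => exact ⟨trivial, List.IsChain.nil⟩
  | @cons x y xs ys hxy htail =>
    obtain ⟨hpch, hchain⟩ := pull_aux h htail hch hxy.2.1
    have hx : List.Chain S.lt x xs :=
      chain_of_le_chain h (PA.lee_of_not_lt h hxy.2.2.1) hchain
    exact ⟨⟨hxy.2, hpch⟩, hx⟩

theorem forall₂_ofFn {R : S.carrier → S.carrier → Prop} :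
    ∀ {n} {f g : Fin n → S.carrier}, (∀ j, R (f j) (g j)) →
      List.Forall₂ R (List.ofFn f) (List.ofFn g) := by
  intro n
  induction n with
  | zero => intro f g _; simp
  | succ n ih =>
    intro f g hfg
    rw [List.ofFn_succ, List.ofFn_succ]
    exact List.Forall₂.cons (hfg 0) (ih (fun j => hfg j.succ))

/-- Characterization of `TopS` with identity steps, at a decomposable code. -/
theorem topS_id_char (h : PAminus S) {L : S.carrier → S.carrier → Prop}
    {x : S.carrier} {xs : List S.carrier} {e a : S.carrier}
    (hlc : listCode S ((x :: xs) ++ [e]) a) (c' : S.carrier) :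
    TopS S L (St0Id S) (StId S) xs.length a c' ↔
      (List.Chain S.lt x xs ∧ ∃ e', listCode S ((x :: xs) ++ [e']) c' ∧ L e e') := by
  rw [topS_iff h hlc]
  constructor
  · rintro ⟨hch, ys, e', hpch, hlc', hLe⟩
    rw [pch0_id.1 hpch] at hlc'
    exact ⟨hch, e', hlc', hLe⟩
  · rintro ⟨hch, e', hlc', hLe⟩
    exact ⟨hch, x :: xs, e', pch0_id.2 rfl, hlc', hLe⟩

/-- Δ⁰₁-comprehension for Δ₀ formulas. -/
theorem ca_delta0 {𝒳 : Set (Set S.carrier)} (hCA : Delta1CA S 𝒳) {φ : Formula}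
    (hδ : φ.IsDelta0) (v : ℕ → S.carrier) (V : ℕ → Set S.carrier) (hV : ∀ i, V i ∈ 𝒳) :
    {a | Formula.Sat S 𝒳 φ (consN a v) V} ∈ 𝒳 :=
  hCA φ φ (IsSigma.delta0 hδ) (IsPi.delta0 hδ) v V hV (fun _ => Iff.rfl)

/-- The easy direction : `RT n (k+1) → RT n k`. -/
theorem rt_down {m k : ℕ} (hk : 2 ≤ k) {S : Struct} {𝒳 : Set (Set S.carrier)}
    (hRCA : RCAstar S 𝒳) (hRT : RT S 𝒳 (m+1) (k+1)) : RT S 𝒳 (m+1) k := by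
  classical
  obtain ⟨hPA, hInd, hColl, hCA, hExp⟩ := hRCA
  intro F f hF hcode
  set v0 : ℕ → S.carrier := fun _ => S.zero with hv0
  set V : ℕ → Set S.carrier := fun _ => F with hV
  set φ' : Formula := (Formula.mem (.var 0) 0).fand (topF (lastLtF k) step0IdF stepIdF m 0 0)
    with hφ'
  have hδ : φ'.IsDelta0 :=
    ⟨trivial, topF_delta0 (last := lastLtF k) (step := stepIdF) (step0 := step0IdF)
      (fun _ _ => ⟨trivial, trivial⟩) (fun _ _ _ => trivial) (fun _ _ => trivial) m 0 0⟩
  have hmemF' : ∀ a, Formula.Sat S 𝒳 φ' (consN a v0) V ↔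
      (a ∈ F ∧ TopS S (LLt S k) (St0Id S) (StId S) m a a) := by
    intro a
    constructor
    · rintro ⟨h1, h2⟩
      exact ⟨h1, (topF_sat hPA (fun _ _ _ => lastLtF_sat) (fun _ _ _ _ => stepIdF_sat)
        (fun _ _ _ => step0IdF_sat) m 0 0 _).1 h2⟩
    · rintro ⟨h1, h2⟩
      exact ⟨h1, (topF_sat hPA (fun _ _ _ => lastLtF_sat) (fun _ _ _ _ => stepIdF_sat)
        (fun _ _ _ => step0IdF_sat) m 0 0 _).2 h2⟩
  set F' : Set S.carrier := {a | Formula.Sat S 𝒳 φ' (consN a v0) V} with hF'def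
  have hF' : F' ∈ 𝒳 := ca_delta0 hCA hδ v0 V (fun _ => hF)
  set f' : (Fin (m+1) → S.carrier) → Fin (k+1) := fun x => Fin.castSucc (f x) with hf'
  have hcode' : CodesCol S F' f' := by
    intro x hx i c hc
    rw [List.ofFn_succ] at hc
    have hlen : (List.ofFn fun j : Fin m => x j.succ).length = m := by simp
    have hchain : List.Chain S.lt (x 0) (List.ofFn fun j : Fin m => x j.succ) := by
      have := (incr_iff_chain hPA x).1 hx
      rw [List.ofFn_succ] at this
      exact this
    have hchar : ∀ c', TopS S (LLt S k) (St0Id S) (StId S) m c c' ↔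
        (List.Chain S.lt (x 0) (List.ofFn fun j : Fin m => x j.succ) ∧
          ∃ e', listCode S ((x 0 :: List.ofFn fun j : Fin m => x j.succ) ++ [e']) c' ∧
            LLt S k (ofNat S i.val) e') := by
      intro c'
      have := topS_id_char (L := LLt S k) hPA hc c'
      rwa [hlen] at this
    rcases Nat.lt_or_ge i.val k with hik | hik
    · set i' : Fin k := ⟨i.val, hik⟩ with hi'
      have hcF : c ∈ F ↔ f x = i' := by
        apply hcode x hx i' c
        rw [List.ofFn_succ]
        exact hc
      have htops : TopS S (LLt S k) (St0Id S) (StId S) m c c :=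
        (hchar c).2 ⟨hchain, ofNat S i.val, hc, PA.ofNat_lt' hPA hik, rfl⟩
      have hfi : f' x = i ↔ f x = i' := by
        rw [hf', hi']
        constructor
        · intro he
          apply Fin.ext
          have := congrArg Fin.val he
          simpa using this
        · intro he
          apply Fin.ext
          have := congrArg Fin.val he
          simpa using this
      rw [hfi]
      constructor
      · intro hcF'
        exact hcF.1 ((hmemF' c).1 hcF').1
      · intro hfx
        exact (hmemF' c).2 ⟨hcF.2 hfx, htops⟩
    · have hne : f' x ≠ i := by
        intro he
        have := congrArg Fin.val he
        simp only [hf', Fin.coe_castSucc] at this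
        have hlt := (f x).2
        omega
      constructor
      · intro hcF'
        exfalso
        obtain ⟨-, htop⟩ := (hmemF' c).1 hcF'
        obtain ⟨-, e', -, hLe⟩ := (hchar c).1 htop
        have := (PA.ofNat_lt_iff hPA).1 hLe.1
        omega
      · intro he
        exact absurd he hne
  obtain ⟨H, hH, hUnb, i', hhom⟩ := hRT F' f' hF' hcode'
  obtain ⟨xw, hxw, hxwH⟩ := exists_incr_tuple hPA hUnb (m+1)
  have h1 : f' xw = i' := hhom xw hxw hxwH
  have hiv : i'.val < k := by
    have := congrArg Fin.val h1
    simp only [hf', Fin.coe_castSucc] at this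
    rw [← this]
    exact (f xw).2
  refine ⟨H, hH, hUnb, ⟨⟨i'.val, hiv⟩, ?_⟩⟩
  intro x hx hxH
  apply Fin.ext
  have := congrArg Fin.val (hhom x hx hxH)
  simpa [hf'] using this

/-! Formulas for the hard direction. -/

def matrix1 (m k : ℕ) : Formula :=
  ((topF (lastLtF (k-1)) step0IdF stepIdF m 1 1).fand (.mem (.var 1) 0)).forr
  ((topF (lastEqF (k-1) k) step0IdF stepIdF m 1 0).fand
    ((Formula.mem (.var 1) 0).forr (.mem (.var 0) 0)))

def psi1mat (m k : ℕ) : Formula :=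
  ((topF (lastLtF (k-1)) step0IdF stepIdF m 1 1).fand (.mem (.var 1) 0)).forr
  ((topF (lastEqF (k-1) (k-1)) step0IdF stepIdF m 1 1).fand
    ((topF (lastEqF (k-1) k) step0IdF stepIdF m 1 0).fneg.forr
      ((Formula.mem (.var 1) 0).forr (.mem (.var 0) 0))))

def phi1 (m k : ℕ) : Formula := .nex (matrix1 m k)
def psi1 (m k : ℕ) : Formula := .nall (psi1mat m k)

def matrix2 (m k : ℕ) : Formula :=
  ((topF (lastEqF 1 k) step0PushF stepPushF m 1 0).fand (.mem (.var 0) 0)).forr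
  ((topF (lastEqF 0 k) step0PushF stepPushF m 1 0).fand (Formula.fneg (.mem (.var 0) 0)))

def psi2mat (m k : ℕ) : Formula :=
  (topF last01F step0IdF stepIdF m 1 1).fand
  (((topF (lastEqF 1 k) step0PushF stepPushF m 1 0).fneg.forr (.mem (.var 0) 0)).fand
   ((topF (lastEqF 0 k) step0PushF stepPushF m 1 0).fneg.forr
      (Formula.fneg (.mem (.var 0) 0))))

def phi2 (m k : ℕ) : Formula := .nex (matrix2 m k)
def psi2 (m k : ℕ) : Formula := .nall (psi2mat m k)

def phi3 : Formula :=
  (Formula.mem (.var 0) 1).fand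
    (.bex (.add (.var 0) .one) ((Formula.mem (.var 0) 0).fand (nxtF 0 false 1)))

section HardSat

variable {𝒳 : Set (Set S.carrier)} {V : ℕ → Set S.carrier} {m k : ℕ}

theorem lastLtF_delta0 {r i j : ℕ} : (lastLtF r i j).IsDelta0 := ⟨trivial, trivial⟩
theorem lastEqF_delta0 {r r' i j : ℕ} : (lastEqF r r' i j).IsDelta0 := ⟨trivial, trivial⟩
theorem last01F_delta0 {i j : ℕ} : (last01F i j).IsDelta0 := ⟨⟨trivial, trivial⟩, trivial⟩

theorem topId_delta0 {lastF : ℕ → ℕ → Formula} (hl : ∀ i j, (lastF i j).IsDelta0)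
    {m ic ic' : ℕ} : (topF lastF step0IdF stepIdF m ic ic').IsDelta0 :=
  topF_delta0 (last := lastF) (step := stepIdF) (step0 := step0IdF) hl
    (fun _ _ _ => trivial) (fun _ _ => trivial) m ic ic'

theorem topPush_delta0 {lastF : ℕ → ℕ → Formula} (hl : ∀ i j, (lastF i j).IsDelta0)
    {m ic ic' : ℕ} : (topF lastF step0PushF stepPushF m ic ic').IsDelta0 :=
  topF_delta0 (last := lastF) (step := stepPushF) (step0 := step0PushF) hl
    (fun _ _ _ => stepPushF_delta0) (fun _ _ => nxtF_delta0) m ic ic'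

theorem matrix1_delta0 : (matrix1 m k).IsDelta0 :=
  ⟨⟨topId_delta0 (fun _ _ => lastLtF_delta0), trivial⟩,
   ⟨topId_delta0 (fun _ _ => lastEqF_delta0), trivial, trivial⟩⟩

theorem psi1mat_delta0 : (psi1mat m k).IsDelta0 :=
  ⟨⟨topId_delta0 (fun _ _ => lastLtF_delta0), trivial⟩,
   ⟨topId_delta0 (fun _ _ => lastEqF_delta0),
    topId_delta0 (fun _ _ => lastEqF_delta0), trivial, trivial⟩⟩

theorem matrix2_delta0 : (matrix2 m k).IsDelta0 :=
  ⟨⟨topPush_delta0 (fun _ _ => lastEqF_delta0), trivial⟩,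
   ⟨topPush_delta0 (fun _ _ => lastEqF_delta0), trivial⟩⟩

theorem psi2mat_delta0 : (psi2mat m k).IsDelta0 :=
  ⟨topId_delta0 (fun _ _ => last01F_delta0),
   ⟨topPush_delta0 (fun _ _ => lastEqF_delta0), trivial⟩,
   ⟨topPush_delta0 (fun _ _ => lastEqF_delta0), trivial⟩⟩

theorem topId_sat (h : PAminus S) {L : S.carrier → S.carrier → Prop}
    {lastF : ℕ → ℕ → Formula}
    (hl : ∀ (v : ℕ → S.carrier) (i j : ℕ), Formula.Sat S 𝒳 (lastF i j) v V ↔ L (v i) (v j))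
    {m ic ic' : ℕ} {v : ℕ → S.carrier} :
    Formula.Sat S 𝒳 (topF lastF step0IdF stepIdF m ic ic') v V ↔
      TopS S L (St0Id S) (StId S) m (v ic) (v ic') :=
  topF_sat h hl (fun _ _ _ _ => stepIdF_sat) (fun _ _ _ => step0IdF_sat) m ic ic' v

theorem topPush_sat (h : PAminus S) {L : S.carrier → S.carrier → Prop}
    {lastF : ℕ → ℕ → Formula}
    (hl : ∀ (v : ℕ → S.carrier) (i j : ℕ), Formula.Sat S 𝒳 (lastF i j) v V ↔ L (v i) (v j))
    {m ic ic' : ℕ} {v : ℕ → S.carrier} :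
    Formula.Sat S 𝒳 (topF lastF step0PushF stepPushF m ic ic') v V ↔
      TopS S L (St0Push S (V 1)) (StPush S (V 1)) m (v ic) (v ic') :=
  topF_sat h hl (fun _ _ _ _ => stepPushF_sat) (fun _ _ _ => step0PushF_sat) m ic ic' v

theorem phi1_sat (h : PAminus S) {a : S.carrier} {v : ℕ → S.carrier} :
    Formula.Sat S 𝒳 (phi1 m k) (consN a v) V ↔
      ∃ c', ((TopS S (LLt S (k-1)) (St0Id S) (StId S) m a a ∧ a ∈ V 0) ∨
        (TopS S (LEq S (k-1) k) (St0Id S) (StId S) m a c' ∧ (a ∈ V 0 ∨ c' ∈ V 0))) := by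
  constructor
  · rintro ⟨c', h1 | h1⟩
    · exact ⟨c', Or.inl ⟨(topId_sat h (fun _ _ _ => lastLtF_sat)).1 h1.1, h1.2⟩⟩
    · exact ⟨c', Or.inr ⟨(topId_sat h (fun _ _ _ => lastEqF_sat)).1 h1.1, h1.2⟩⟩
  · rintro ⟨c', h1 | h1⟩
    · exact ⟨c', Or.inl ⟨(topId_sat h (fun _ _ _ => lastLtF_sat)).2 h1.1, h1.2⟩⟩
    · exact ⟨c', Or.inr ⟨(topId_sat h (fun _ _ _ => lastEqF_sat)).2 h1.1, h1.2⟩⟩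

theorem psi1_sat (h : PAminus S) {a : S.carrier} {v : ℕ → S.carrier} :
    Formula.Sat S 𝒳 (psi1 m k) (consN a v) V ↔
      ∀ c', ((TopS S (LLt S (k-1)) (St0Id S) (StId S) m a a ∧ a ∈ V 0) ∨
        (TopS S (LEq S (k-1) (k-1)) (St0Id S) (StId S) m a a ∧
          (¬ TopS S (LEq S (k-1) k) (St0Id S) (StId S) m a c' ∨ (a ∈ V 0 ∨ c' ∈ V 0)))) := by
  constructor
  · intro hh c'
    rcases hh c' with h1 | ⟨h1, h2⟩
    · exact Or.inl ⟨(topId_sat h (fun _ _ _ => lastLtF_sat)).1 h1.1, h1.2⟩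
    · refine Or.inr ⟨(topId_sat h (fun _ _ _ => lastEqF_sat)).1 h1, ?_⟩
      rcases h2 with h2 | h2
      · exact Or.inl (fun hc => h2 ((topId_sat h (fun _ _ _ => lastEqF_sat)).2 hc))
      · exact Or.inr h2
  · intro hh c'
    rcases hh c' with h1 | ⟨h1, h2⟩
    · exact Or.inl ⟨(topId_sat h (fun _ _ _ => lastLtF_sat)).2 h1.1, h1.2⟩
    · refine Or.inr ⟨(topId_sat h (fun _ _ _ => lastEqF_sat)).2 h1, ?_⟩
      rcases h2 with h2 | h2
      · exact Or.inl (fun hc => h2 ((topId_sat h (fun _ _ _ => lastEqF_sat)).1 hc))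
      · exact Or.inr h2

theorem phi2_sat (h : PAminus S) {a : S.carrier} {v : ℕ → S.carrier} :
    Formula.Sat S 𝒳 (phi2 m k) (consN a v) V ↔
      ∃ c', ((TopS S (LEq S 1 k) (St0Push S (V 1)) (StPush S (V 1)) m a c' ∧ c' ∈ V 0) ∨
        (TopS S (LEq S 0 k) (St0Push S (V 1)) (StPush S (V 1)) m a c' ∧ c' ∉ V 0)) := by
  constructor
  · rintro ⟨c', h1 | h1⟩
    · exact ⟨c', Or.inl ⟨(topPush_sat h (fun _ _ _ => lastEqF_sat)).1 h1.1, h1.2⟩⟩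
    · exact ⟨c', Or.inr ⟨(topPush_sat h (fun _ _ _ => lastEqF_sat)).1 h1.1, h1.2⟩⟩
  · rintro ⟨c', h1 | h1⟩
    · exact ⟨c', Or.inl ⟨(topPush_sat h (fun _ _ _ => lastEqF_sat)).2 h1.1, h1.2⟩⟩
    · exact ⟨c', Or.inr ⟨(topPush_sat h (fun _ _ _ => lastEqF_sat)).2 h1.1, h1.2⟩⟩

theorem psi2_sat (h : PAminus S) {a : S.carrier} {v : ℕ → S.carrier} :
    Formula.Sat S 𝒳 (psi2 m k) (consN a v) V ↔
      ∀ c', (TopS S (L01 S) (St0Id S) (StId S) m a a ∧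
        (¬ TopS S (LEq S 1 k) (St0Push S (V 1)) (StPush S (V 1)) m a c' ∨ c' ∈ V 0) ∧
        (¬ TopS S (LEq S 0 k) (St0Push S (V 1)) (StPush S (V 1)) m a c' ∨ c' ∉ V 0)) := by
  constructor
  · intro hh c'
    obtain ⟨h1, h2, h3⟩ := hh c'
    refine ⟨(topId_sat h (fun _ _ _ => last01F_sat)).1 h1, ?_, ?_⟩
    · rcases h2 with h2 | h2
      · exact Or.inl (fun hc => h2 ((topPush_sat h (fun _ _ _ => lastEqF_sat)).2 hc))
      · exact Or.inr h2
    · rcases h3 with h3 | h3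
      · exact Or.inl (fun hc => h3 ((topPush_sat h (fun _ _ _ => lastEqF_sat)).2 hc))
      · exact Or.inr h3
  · intro hh c'
    obtain ⟨h1, h2, h3⟩ := hh c'
    refine ⟨(topId_sat h (fun _ _ _ => last01F_sat)).2 h1, ?_, ?_⟩
    · rcases h2 with h2 | h2
      · exact Or.inl (fun hc => h2 ((topPush_sat h (fun _ _ _ => lastEqF_sat)).1 hc))
      · exact Or.inr h2
    · rcases h3 with h3 | h3
      · exact Or.inl (fun hc => h3 ((topPush_sat h (fun _ _ _ => lastEqF_sat)).1 hc))
      · exact Or.inr h3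

theorem phi3_sat {y : S.carrier} {v : ℕ → S.carrier} :
    Formula.Sat S 𝒳 phi3 (consN y v) V ↔
      (y ∈ V 1 ∧ ∃ x, S.lt x (S.add y S.one) ∧ x ∈ V 0 ∧ NxtRel S (V 1) x y) := by
  constructor
  · rintro ⟨h1, x, hxb, h2, h3⟩
    exact ⟨h1, x, hxb, h2, nxtF_sat.1 h3⟩
  · rintro ⟨h1, x, hxb, h2, h3⟩
    exact ⟨h1, x, hxb, h2, nxtF_sat.2 h3⟩

theorem phi3_delta0 : (phi3).IsDelta0 := ⟨trivial, trivial, nxtF_delta0⟩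

end HardSat

/-! Pointwise equivalences needed for Δ⁰₁-comprehension. -/

theorem equiv1 (h : PAminus S)
    (hev : ∀ s, ∃ u, S.add u u = S.mul s (S.add s S.one)) {m k : ℕ}
    {F : Set S.carrier} (a : S.carrier) :
    (∃ c', ((TopS S (LLt S (k-1)) (St0Id S) (StId S) m a a ∧ a ∈ F) ∨
      (TopS S (LEq S (k-1) k) (St0Id S) (StId S) m a c' ∧ (a ∈ F ∨ c' ∈ F)))) ↔
    (∀ c', ((TopS S (LLt S (k-1)) (St0Id S) (StId S) m a a ∧ a ∈ F) ∨
      (TopS S (LEq S (k-1) (k-1)) (St0Id S) (StId S) m a a ∧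
        (¬ TopS S (LEq S (k-1) k) (St0Id S) (StId S) m a c' ∨ (a ∈ F ∨ c' ∈ F))))) := by
  classical
  by_cases hdec : ∃ (x : S.carrier) (xs : List S.carrier) (e : S.carrier),
      xs.length = m ∧ listCode S ((x :: xs) ++ [e]) a
  · obtain ⟨x, xs, e, hlen, hlc⟩ := hdec
    have hcharA := fun c' => by
      have := topS_id_char (L := LLt S (k-1)) h hlc c'
      rwa [hlen] at this
    have hcharB := fun c' => by
      have := topS_id_char (L := LEq S (k-1) k) h hlc c'
      rwa [hlen] at this
    have hcharB0 := fun c' => by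
      have := topS_id_char (L := LEq S (k-1) (k-1)) h hlc c'
      rwa [hlen] at this
    by_cases hch : List.Chain S.lt x xs
    · have hA : TopS S (LLt S (k-1)) (St0Id S) (StId S) m a a ↔
          S.lt e (ofNat S (k-1)) := by
        rw [hcharA a]
        constructor
        · rintro ⟨-, e', hlc', hlt, rfl⟩
          exact hlt
        · intro hlt
          exact ⟨hch, e, hlc, hlt, rfl⟩
      obtain ⟨ck, hck⟩ := lc_total h hev ((x :: xs) ++ [ofNat S k]) (by simp)
      have hB : ∀ c', TopS S (LEq S (k-1) k) (St0Id S) (StId S) m a c' ↔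
          (e = ofNat S (k-1) ∧ c' = ck) := by
        intro c'
        rw [hcharB c']
        constructor
        · rintro ⟨-, e', hlc', he, rfl⟩
          exact ⟨he, lc_fun h _ _ _ hlc' hck⟩
        · rintro ⟨he, rfl⟩
          exact ⟨hch, ofNat S k, hck, he, rfl⟩
      have hB0 : TopS S (LEq S (k-1) (k-1)) (St0Id S) (StId S) m a a ↔
          e = ofNat S (k-1) := by
        rw [hcharB0 a]
        constructor
        · rintro ⟨-, e', hlc', he, rfl⟩
          exact he
        · intro he
          exact ⟨hch, e, hlc, he, by rw [he]⟩
      by_cases hae : e = ofNat S (k-1)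
      · constructor
        · rintro ⟨c', ⟨htA, haF⟩ | ⟨htB, hmem⟩⟩
          · exact fun c'' => Or.inl ⟨htA, haF⟩
          · obtain ⟨-, rfl⟩ := (hB c').1 htB
            intro c''
            right
            refine ⟨hB0.2 hae, ?_⟩
            by_cases htB'' : TopS S (LEq S (k-1) k) (St0Id S) (StId S) m a c''
            · obtain ⟨-, rfl⟩ := (hB c'').1 htB''
              exact Or.inr hmem
            · exact Or.inl htB''
        · intro hall
          rcases hall ck with ⟨htA, haF⟩ | ⟨htB0, hor⟩
          · exact ⟨S.zero, Or.inl ⟨htA, haF⟩⟩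
          · have htBck : TopS S (LEq S (k-1) k) (St0Id S) (StId S) m a ck :=
              (hB ck).2 ⟨hae, rfl⟩
            rcases hor with hno | hmem
            · exact absurd htBck hno
            · exact ⟨ck, Or.inr ⟨htBck, hmem⟩⟩
      · constructor
        · rintro ⟨c', ⟨htA, haF⟩ | ⟨htB, -⟩⟩
          · exact fun c'' => Or.inl ⟨htA, haF⟩
          · exact absurd ((hB c').1 htB).1 hae
        · intro hall
          rcases hall S.zero with ⟨htA, haF⟩ | ⟨htB0, -⟩
          · exact ⟨S.zero, Or.inl ⟨htA, haF⟩⟩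
          · exact absurd (hB0.1 htB0) hae
    · have hno : ∀ (L : S.carrier → S.carrier → Prop) c',
          ¬ TopS S L (St0Id S) (StId S) m a c' := by
        intro L c' ht
        rw [← hlen] at ht
        exact hch ((topS_iff h hlc).1 ht).1
      apply iff_of_false
      · rintro ⟨c', ⟨ht, -⟩ | ⟨ht, -⟩⟩
        exacts [hno _ a ht, hno _ c' ht]
      · intro hall
        rcases hall S.zero with ⟨ht, -⟩ | ⟨ht, -⟩
        exacts [hno _ a ht, hno _ a ht]
  · have hno : ∀ (L : S.carrier → S.carrier → Prop) c',
        ¬ TopS S L (St0Id S) (StId S) m a c' := by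
      intro L c' ht
      obtain ⟨x, xs, e, hlen, hlc⟩ := topS_extract ht
      exact hdec ⟨x, xs, e, hlen, hlc⟩
    apply iff_of_false
    · rintro ⟨c', ⟨ht, -⟩ | ⟨ht, -⟩⟩
      exacts [hno _ a ht, hno _ c' ht]
    · intro hall
      rcases hall S.zero with ⟨ht, -⟩ | ⟨ht, -⟩
      exacts [hno _ a ht, hno _ a ht]

theorem equiv2 (h : PAminus S)
    (hev : ∀ s, ∃ u, S.add u u = S.mul s (S.add s S.one)) {m k : ℕ}
    {F H : Set S.carrier} (hNx : ∀ u, ∃ y, NxtRel S H u y) (a : S.carrier) :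
    (∃ c', ((TopS S (LEq S 1 k) (St0Push S H) (StPush S H) m a c' ∧ c' ∈ F) ∨
      (TopS S (LEq S 0 k) (St0Push S H) (StPush S H) m a c' ∧ c' ∉ F))) ↔
    (∀ c', (TopS S (L01 S) (St0Id S) (StId S) m a a ∧
      (¬ TopS S (LEq S 1 k) (St0Push S H) (StPush S H) m a c' ∨ c' ∈ F) ∧
      (¬ TopS S (LEq S 0 k) (St0Push S H) (StPush S H) m a c' ∨ c' ∉ F))) := by
  classical
  by_cases hdec : ∃ (x : S.carrier) (xs : List S.carrier) (e : S.carrier),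
      xs.length = m ∧ listCode S ((x :: xs) ++ [e]) a
  · obtain ⟨x, xs, e, hlen, hlc⟩ := hdec
    by_cases hch : List.Chain S.lt x xs
    · obtain ⟨ys, hys⟩ := pch0_total hNx (x :: xs)
      obtain ⟨ck, hck⟩ := lc_total h hev (ys ++ [ofNat S k]) (by simp)
      have hE : ∀ (r : ℕ) c', TopS S (LEq S r k) (St0Push S H) (StPush S H) m a c' ↔
          (e = ofNat S r ∧ c' = ck) := by
        intro r c'
        rw [← hlen, topS_iff h hlc]
        constructor
        · rintro ⟨-, ys', e', hpch', hlc', he, rfl⟩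
          obtain rfl : ys = ys' := pch0_fun h hys hpch'
          exact ⟨he, lc_fun h _ _ _ hlc' hck⟩
        · rintro ⟨he, rfl⟩
          exact ⟨hch, ys, ofNat S k, hys, hck, he, rfl⟩
      have h01 : TopS S (L01 S) (St0Id S) (StId S) m a a ↔
          (e = ofNat S 0 ∨ e = ofNat S 1) := by
        have := topS_id_char (L := L01 S) h hlc a
        rw [hlen] at this
        rw [this]
        constructor
        · rintro ⟨-, e', hlc', hor, rfl⟩
          exact hor
        · intro hor
          exact ⟨hch, e, hlc, hor, rfl⟩
      have hne01 : (ofNat S 0 : S.carrier) ≠ ofNat S 1 := by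
        intro hq
        exact absurd ((PA.ofNat_eq_iff h).1 hq) (by omega)
      by_cases he1 : e = ofNat S 1
      · constructor
        · rintro ⟨c', ⟨htE, hmem⟩ | ⟨htE, hmem⟩⟩
          · obtain ⟨-, rfl⟩ := (hE 1 c').1 htE
            intro c''
            refine ⟨h01.2 (Or.inr he1), ?_, ?_⟩
            · by_cases ht'' : TopS S (LEq S 1 k) (St0Push S H) (StPush S H) m a c''
              · obtain ⟨-, rfl⟩ := (hE 1 c'').1 ht''
                exact Or.inr hmem
              · exact Or.inl ht''
            · left
              intro ht''
              exact hne01 ((((hE 0 c'').1 ht'').1).symm.trans he1)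
          · exact absurd ((hE 0 c').1 htE).1 (by rw [he1]; exact fun hq => hne01 hq.symm)
        · intro hall
          obtain ⟨-, h2, -⟩ := hall ck
          have htE : TopS S (LEq S 1 k) (St0Push S H) (StPush S H) m a ck :=
            (hE 1 ck).2 ⟨he1, rfl⟩
          rcases h2 with hno | hmem
          · exact absurd htE hno
          · exact ⟨ck, Or.inl ⟨htE, hmem⟩⟩
      · by_cases he0 : e = ofNat S 0
        · constructor
          · rintro ⟨c', ⟨htE, hmem⟩ | ⟨htE, hmem⟩⟩
            · exact absurd ((hE 1 c').1 htE).1 he1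
            · obtain ⟨-, rfl⟩ := (hE 0 c').1 htE
              intro c''
              refine ⟨h01.2 (Or.inl he0), ?_, ?_⟩
              · left
                intro ht''
                exact he1 ((hE 1 c'').1 ht'').1
              · by_cases ht'' : TopS S (LEq S 0 k) (St0Push S H) (StPush S H) m a c''
                · obtain ⟨-, rfl⟩ := (hE 0 c'').1 ht''
                  exact Or.inr hmem
                · exact Or.inl ht''
          · intro hall
            obtain ⟨-, -, h3⟩ := hall ck
            have htE : TopS S (LEq S 0 k) (St0Push S H) (StPush S H) m a ck :=
              (hE 0 ck).2 ⟨he0, rfl⟩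
            rcases h3 with hno | hmem
            · exact absurd htE hno
            · exact ⟨ck, Or.inr ⟨htE, hmem⟩⟩
        · apply iff_of_false
          · rintro ⟨c', ⟨htE, -⟩ | ⟨htE, -⟩⟩
            · exact he1 ((hE 1 c').1 htE).1
            · exact he0 ((hE 0 c').1 htE).1
          · intro hall
            obtain ⟨ht01, -, -⟩ := hall S.zero
            rcases h01.1 ht01 with hq | hq
            exacts [he0 hq, he1 hq]
    · have hnoP : ∀ (r : ℕ) c', ¬ TopS S (LEq S r k) (St0Push S H) (StPush S H) m a c' := by
        intro r c' ht
        rw [← hlen] at ht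
        exact hch ((topS_iff h hlc).1 ht).1
      have hnoI : ¬ TopS S (L01 S) (St0Id S) (StId S) m a a := by
        intro ht
        rw [← hlen] at ht
        exact hch ((topS_iff h hlc).1 ht).1
      apply iff_of_false
      · rintro ⟨c', ⟨ht, -⟩ | ⟨ht, -⟩⟩
        exacts [hnoP 1 c' ht, hnoP 0 c' ht]
      · intro hall
        exact hnoI (hall S.zero).1
  · have hnoP : ∀ (r : ℕ) c', ¬ TopS S (LEq S r k) (St0Push S H) (StPush S H) m a c' := by
      intro r c' ht
      obtain ⟨x, xs, e, hlen, hlc⟩ := topS_extract ht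
      exact hdec ⟨x, xs, e, hlen, hlc⟩
    have hnoI : ¬ TopS S (L01 S) (St0Id S) (StId S) m a a := by
      intro ht
      obtain ⟨x, xs, e, hlen, hlc⟩ := topS_extract ht
      exact hdec ⟨x, xs, e, hlen, hlc⟩
    apply iff_of_false
    · rintro ⟨c', ⟨ht, -⟩ | ⟨ht, -⟩⟩
      exacts [hnoP 1 c' ht, hnoP 0 c' ht]
    · intro hall
      exact hnoI (hall S.zero).1

/-- The hard direction : `RT n k → RT n (k+1)`. -/
theorem rt_up {m k : ℕ} (hk : 2 ≤ k) {S : Struct} {𝒳 : Set (Set S.carrier)}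
    (hRCA : RCAstar S 𝒳) (hRT : RT S 𝒳 (m+1) k) : RT S 𝒳 (m+1) (k+1) := by
  classical
  obtain ⟨hPA, hInd, hColl, hCA, hExp⟩ := hRCA
  intro F f hF hcode
  have hev : ∀ s, ∃ u, S.add u u = S.mul s (S.add s S.one) :=
    PA.even_total hPA hInd hF
  set v0 : ℕ → S.carrier := fun _ => S.zero with hv0
  set VF : ℕ → Set S.carrier := fun _ => F with hVF
  have hVF0 : VF 0 = F := rfl
  -- Step 1 : the merged colouring
  have hG1 : {a | Formula.Sat S 𝒳 (phi1 m k) (consN a v0) VF} ∈ 𝒳 := by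
    apply hCA (phi1 m k) (psi1 m k) (IsSigma.ex (IsSigma.delta0 matrix1_delta0))
      (IsPi.all (IsPi.delta0 psi1mat_delta0)) v0 VF (fun _ => hF)
    intro a
    rw [phi1_sat hPA, psi1_sat hPA, show VF 0 = F from rfl]
    exact equiv1 hPA hev a
  set g1 : (Fin (m+1) → S.carrier) → Fin k := fun x =>
    if hfx : (f x).val < k then ⟨(f x).val, hfx⟩ else ⟨k-1, by omega⟩ with hg1
  have hcode1 : CodesCol S {a | Formula.Sat S 𝒳 (phi1 m k) (consN a v0) VF} g1 := by
    intro x hx i c hc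
    rw [List.ofFn_succ] at hc
    have hlen : (List.ofFn fun j : Fin m => x j.succ).length = m := by simp
    have hchain : List.Chain S.lt (x 0) (List.ofFn fun j : Fin m => x j.succ) := by
      have := (incr_iff_chain hPA x).1 hx
      rw [List.ofFn_succ] at this
      exact this
    obtain ⟨ck, hck⟩ := lc_total hPA hev
      ((x 0 :: List.ofFn fun j : Fin m => x j.succ) ++ [ofNat S k]) (by simp)
    have hA : TopS S (LLt S (k-1)) (St0Id S) (StId S) m c c ↔ (i.val < k-1) := by
      have hq := topS_id_char (L := LLt S (k-1)) hPA hc c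
      rw [hlen] at hq
      rw [hq]
      constructor
      · rintro ⟨-, e', hlc', hlt, rfl⟩
        exact (PA.ofNat_lt_iff hPA).1 hlt
      · intro hlt
        exact ⟨hchain, ofNat S i.val, hc, PA.ofNat_lt' hPA hlt, rfl⟩
    have hB : ∀ c', TopS S (LEq S (k-1) k) (St0Id S) (StId S) m c c' ↔
        (i.val = k-1 ∧ c' = ck) := by
      intro c'
      have hq := topS_id_char (L := LEq S (k-1) k) hPA hc c'
      rw [hlen] at hq
      rw [hq]
      constructor
      · rintro ⟨-, e', hlc', he, rfl⟩
        exact ⟨(PA.ofNat_eq_iff hPA).1 he, lc_fun hPA _ _ _ hlc' hck⟩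
      · rintro ⟨he, rfl⟩
        exact ⟨hchain, ofNat S k, hck, by rw [he], rfl⟩
    have hcF : c ∈ F ↔ f x = Fin.castSucc i := by
      apply hcode x hx (Fin.castSucc i) c
      rw [List.ofFn_succ]
      exact hc
    have hckF : ck ∈ F ↔ f x = Fin.last k := by
      apply hcode x hx (Fin.last k) ck
      rw [List.ofFn_succ]
      exact hck
    have hmem : c ∈ {a | Formula.Sat S 𝒳 (phi1 m k) (consN a v0) VF} ↔
        ((i.val < k-1 ∧ f x = Fin.castSucc i) ∨
          (i.val = k-1 ∧ (f x = Fin.castSucc i ∨ f x = Fin.last k))) := by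
      rw [Set.mem_setOf_eq, phi1_sat hPA, show VF 0 = F from rfl]
      constructor
      · rintro ⟨c', ⟨htA, haF⟩ | ⟨htB, hor⟩⟩
        · exact Or.inl ⟨hA.1 htA, hcF.1 haF⟩
        · obtain ⟨hval, rfl⟩ := (hB c').1 htB
          refine Or.inr ⟨hval, ?_⟩
          rcases hor with hq | hq
          exacts [Or.inl (hcF.1 hq), Or.inr (hckF.1 hq)]
      · rintro (⟨hval, hfx⟩ | ⟨hval, hor⟩)
        · exact ⟨S.zero, Or.inl ⟨hA.2 hval, hcF.2 hfx⟩⟩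
        · refine ⟨ck, Or.inr ⟨(hB ck).2 ⟨hval, rfl⟩, ?_⟩⟩
          rcases hor with hq | hq
          exacts [Or.inl (hcF.2 hq), Or.inr (hckF.2 hq)]
    rw [hmem]
    by_cases hfx : (f x).val < k
    · have hgx : g1 x = ⟨(f x).val, hfx⟩ := by rw [hg1]; exact dif_pos hfx
      constructor
      · rintro (⟨hvi, hfe⟩ | ⟨hvi, hfe | hfe⟩)
        · rw [hgx]; apply Fin.ext; simpa using congrArg Fin.val hfe
        · rw [hgx]; apply Fin.ext; simpa using congrArg Fin.val hfe
        · exfalso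
          have := congrArg Fin.val hfe
          simp [Fin.val_last] at this
          omega
      · intro hgxi
        rw [hgx] at hgxi
        have hvi : (f x).val = i.val := by simpa using congrArg Fin.val hgxi
        have hfe : f x = Fin.castSucc i := by apply Fin.ext; simpa using hvi
        rcases Nat.lt_or_ge i.val (k-1) with hq | hq
        · exact Or.inl ⟨hq, hfe⟩
        · have hi_lt : i.val < k := i.2
          exact Or.inr ⟨by omega, Or.inl hfe⟩
    · have hfk : (f x).val = k := by have := (f x).2; omega
      have hgx : g1 x = ⟨k-1, by omega⟩ := by rw [hg1]; exact dif_neg hfx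
      have hfl : f x = Fin.last k := by apply Fin.ext; simpa [Fin.val_last] using hfk
      have hnc : f x ≠ Fin.castSucc i := by
        intro hq
        have := congrArg Fin.val hq
        simp at this
        have := i.2
        omega
      constructor
      · rintro (⟨hvi, hfe⟩ | ⟨hvi, hfe | hfe⟩)
        · exact absurd hfe hnc
        · exact absurd hfe hnc
        · rw [hgx]; apply Fin.ext; simp; omega
      · intro hgxi
        rw [hgx] at hgxi
        have hki : k - 1 = i.val := by simpa using congrArg Fin.val hgxi
        exact Or.inr ⟨hki.symm, Or.inr hfl⟩
  obtain ⟨H1, hH1, hU1, i1, hhom1⟩ := hRT _ g1 hG1 hcode1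
  by_cases hcase : i1.val < k - 1
  · refine ⟨H1, hH1, hU1, ⟨⟨i1.val, by omega⟩, ?_⟩⟩
    intro x hx hxH
    have hg := hhom1 x hx hxH
    simp only [hg1] at hg
    by_cases hfx : (f x).val < k
    · rw [dif_pos hfx] at hg
      apply Fin.ext
      simpa using congrArg Fin.val hg
    · exfalso
      rw [dif_neg hfx] at hg
      have := congrArg Fin.val hg
      simp at this
      omega
  · -- Step 2 : binary colouring through H1
    have hNx : ∀ u, ∃ y, NxtRel S H1 u y := PA.nxt_total hPA hInd hH1 hU1
    set V2 : ℕ → Set S.carrier := fun j => if j = 0 then F else H1 with hV2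
    have hV20 : V2 0 = F := rfl
    have hV21 : V2 1 = H1 := rfl
    have hV2mem : ∀ j, V2 j ∈ 𝒳 := by
      intro j
      rw [hV2]
      by_cases hj : j = 0 <;> simp [hj, hF, hH1]
    have hG2 : {a | Formula.Sat S 𝒳 (phi2 m k) (consN a v0) V2} ∈ 𝒳 := by
      apply hCA (phi2 m k) (psi2 m k) (IsSigma.ex (IsSigma.delta0 matrix2_delta0))
        (IsPi.all (IsPi.delta0 psi2mat_delta0)) v0 V2 hV2mem
      intro a
      rw [phi2_sat hPA, psi2_sat hPA, show V2 0 = F from rfl, show V2 1 = H1 from rfl]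
      exact equiv2 hPA hev hNx a
    have hPex : ∀ l : List S.carrier, ∃ ys, PCh0 (St0Push S H1) (StPush S H1) l ys :=
      pch0_total hNx
    set P : List S.carrier → List S.carrier := fun l => Classical.choose (hPex l) with hPdef
    have hP : ∀ l, PCh0 (St0Push S H1) (StPush S H1) l (P l) :=
      fun l => Classical.choose_spec (hPex l)
    set f2 : (Fin (m+1) → S.carrier) → Fin k := fun x =>
      if f (tup S (m+1) (P (List.ofFn x))) = Fin.last k then ⟨1, by omega⟩ else ⟨0, by omega⟩
      with hf2
    have hcode2 : CodesCol S {a | Formula.Sat S 𝒳 (phi2 m k) (consN a v0) V2} f2 := by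
      intro x hx i c hc
      rw [List.ofFn_succ] at hc
      have hlen : (List.ofFn fun j : Fin m => x j.succ).length = m := by simp
      have hchain : List.Chain S.lt (x 0) (List.ofFn fun j : Fin m => x j.succ) := by
        have := (incr_iff_chain hPA x).1 hx
        rw [List.ofFn_succ] at this
        exact this
      have hofn : List.ofFn x = x 0 :: List.ofFn fun j : Fin m => x j.succ :=
        List.ofFn_succ (f := x)
      have hys : PCh0 (St0Push S H1) (StPush S H1)
          (x 0 :: List.ofFn fun j : Fin m => x j.succ) (P (List.ofFn x)) := by
        rw [← hofn]
        exact hP _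
      have hylen : (P (List.ofFn x)).length = m + 1 := by
        rw [pch0_len hys]
        simp
      obtain ⟨ck, hck⟩ := lc_total hPA hev (P (List.ofFn x) ++ [ofNat S k]) (by simp)
      have hE : ∀ (r : ℕ) c', TopS S (LEq S r k) (St0Push S H1) (StPush S H1) m c c' ↔
          (i.val = r ∧ c' = ck) := by
        intro r c'
        have hq := topS_iff (L := LEq S r k) (St0 := St0Push S H1) (St := StPush S H1)
          (c' := c') hPA hc
        rw [hlen] at hq
        rw [hq]
        constructor
        · rintro ⟨-, ys', e', hpch', hlc', he, rfl⟩
          obtain rfl : P (List.ofFn x) = ys' := pch0_fun hPA hys hpch'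
          exact ⟨(PA.ofNat_eq_iff hPA).1 he, lc_fun hPA _ _ _ hlc' hck⟩
        · rintro ⟨he, rfl⟩
          exact ⟨hchain, P (List.ofFn x), ofNat S k, hys, hck, by rw [he], rfl⟩
      obtain ⟨hchys, hmemys⟩ := pch0_chain_mem hPA hys
      have hincr : Incr S (tup S (m+1) (P (List.ofFn x))) := by
        rw [incr_iff_chain hPA, ofFn_tup hylen]
        exact hchys
      have hckF : ck ∈ F ↔ f (tup S (m+1) (P (List.ofFn x))) = Fin.last k := by
        apply hcode _ hincr (Fin.last k) ck
        rw [ofFn_tup hylen]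
        exact hck
      have hmem : c ∈ {a | Formula.Sat S 𝒳 (phi2 m k) (consN a v0) V2} ↔
          ((i.val = 1 ∧ ck ∈ F) ∨ (i.val = 0 ∧ ck ∉ F)) := by
        rw [Set.mem_setOf_eq, phi2_sat hPA, show V2 0 = F from rfl, show V2 1 = H1 from rfl]
        constructor
        · rintro ⟨c', ⟨htE, hmem'⟩ | ⟨htE, hmem'⟩⟩
          · obtain ⟨hv, rfl⟩ := (hE 1 c').1 htE
            exact Or.inl ⟨hv, hmem'⟩
          · obtain ⟨hv, rfl⟩ := (hE 0 c').1 htE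
            exact Or.inr ⟨hv, hmem'⟩
        · rintro (⟨hv, hmem'⟩ | ⟨hv, hmem'⟩)
          · exact ⟨ck, Or.inl ⟨(hE 1 ck).2 ⟨hv, rfl⟩, hmem'⟩⟩
          · exact ⟨ck, Or.inr ⟨(hE 0 ck).2 ⟨hv, rfl⟩, hmem'⟩⟩
      rw [hmem]
      simp only [hf2]
      by_cases hfl : f (tup S (m+1) (P (List.ofFn x))) = Fin.last k
      · rw [if_pos hfl]
        constructor
        · rintro (⟨hv, -⟩ | ⟨hv, hnot⟩)
          · apply Fin.ext; simpa using hv.symm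
          · exact absurd (hckF.2 hfl) hnot
        · intro hq
          have hv : i.val = 1 := by simpa using (congrArg Fin.val hq).symm
          exact Or.inl ⟨hv, hckF.2 hfl⟩
      · rw [if_neg hfl]
        constructor
        · rintro (⟨hv, hckin⟩ | ⟨hv, -⟩)
          · exact absurd (hckF.1 hckin) hfl
          · apply Fin.ext; simpa using hv.symm
        · intro hq
          have hv : i.val = 0 := by simpa using (congrArg Fin.val hq).symm
          exact Or.inr ⟨hv, fun hin => hfl (hckF.1 hin)⟩
    obtain ⟨H2, hH2, hU2, i2, hhom2⟩ := hRT _ f2 hG2 hcode2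
    -- Step 3 : pull back along next_H1
    set V3 : ℕ → Set S.carrier := fun j => if j = 0 then H2 else H1 with hV3
    have hV3mem : ∀ j, V3 j ∈ 𝒳 := by
      intro j
      rw [hV3]
      by_cases hj : j = 0 <;> simp [hj, hH2, hH1]
    have hH3 : {a | Formula.Sat S 𝒳 phi3 (consN a v0) V3} ∈ 𝒳 :=
      ca_delta0 hCA phi3_delta0 v0 V3 hV3mem
    have hmem3 : ∀ y, Formula.Sat S 𝒳 phi3 (consN y v0) V3 ↔
        (y ∈ H1 ∧ ∃ xv, S.lt xv (S.add y S.one) ∧ xv ∈ H2 ∧ NxtRel S H1 xv y) :=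
      fun y => phi3_sat
    have hUnb3 : Unbdd S {a | Formula.Sat S 𝒳 phi3 (consN a v0) V3} := by
      intro a
      obtain ⟨b, hbH2, hab⟩ := hU2 a
      obtain ⟨y, hy⟩ := hNx b
      have hby : S.le b y := PA.lee_of_not_lt hPA hy.2.1
      refine ⟨y, (hmem3 y).2 ⟨hy.1, b, PA.lt_succ_le hPA hby, hbH2, hy⟩, ?_⟩
      exact PA.lt_of_lt_of_le' hPA hab hby
    have hkey : ∀ y : Fin (m+1) → S.carrier, Incr S y →
        (∀ j, y j ∈ {a | Formula.Sat S 𝒳 phi3 (consN a v0) V3}) →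
        ∃ xc : Fin (m+1) → S.carrier, Incr S xc ∧ (∀ j, xc j ∈ H2) ∧
          f2 xc = (if f y = Fin.last k then (⟨1, by omega⟩ : Fin k) else ⟨0, by omega⟩) := by
      intro y hy hyH3
      have hsel : ∀ j, ∃ xj, xj ∈ H2 ∧ NxtRel S H1 xj (y j) := by
        intro j
        obtain ⟨-, xv, -, h2, h3⟩ := (hmem3 (y j)).1 (hyH3 j)
        exact ⟨xv, h2, h3⟩
      choose xc hxc1 hxc2 using hsel
      have hfa : List.Forall₂ (fun a b => a ∈ H2 ∧ NxtRel S H1 a b)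
          (List.ofFn xc) (List.ofFn y) := forall₂_ofFn (fun j => ⟨hxc1 j, hxc2 j⟩)
      obtain ⟨hpch0, hxchain⟩ := pch0_pull hPA hfa ((incr_iff_chain hPA y).1 hy)
      have hPeq : P (List.ofFn xc) = List.ofFn y := pch0_fun hPA (hP _) hpch0
      refine ⟨xc, (incr_iff_chain hPA xc).2 hxchain, hxc1, ?_⟩
      simp only [hf2, hPeq, tup_ofFn]
    rcases (by
      obtain ⟨xw, hxw, hxwH⟩ := exists_incr_tuple hPA hU2 (m+1)
      have hq := hhom2 xw hxw hxwH
      simp only [hf2] at hq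
      by_cases hc : f (tup S (m+1) (P (List.ofFn xw))) = Fin.last k
      · rw [if_pos hc] at hq
        exact Or.inl hq.symm
      · rw [if_neg hc] at hq
        exact Or.inr hq.symm :
      i2 = (⟨1, by omega⟩ : Fin k) ∨ i2 = (⟨0, by omega⟩ : Fin k)) with hi2 | hi2
    · refine ⟨_, hH3, hUnb3, ⟨Fin.last k, ?_⟩⟩
      intro y hy hyH3
      obtain ⟨xc, hxcI, hxcH2, hval⟩ := hkey y hy hyH3
      have hq := hhom2 xc hxcI hxcH2
      rw [hval, hi2] at hq
      by_cases hfl : f y = Fin.last k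
      · exact hfl
      · exfalso
        rw [if_neg hfl] at hq
        have := congrArg Fin.val hq
        simp at this
    · refine ⟨_, hH3, hUnb3, ⟨⟨k-1, by omega⟩, ?_⟩⟩
      intro y hy hyH3
      obtain ⟨xc, hxcI, hxcH2, hval⟩ := hkey y hy hyH3
      have hq := hhom2 xc hxcI hxcH2
      rw [hval, hi2] at hq
      have hfl : f y ≠ Fin.last k := by
        intro hc
        rw [if_pos hc] at hq
        have := congrArg Fin.val hq
        simp at this
      have hyH1 : ∀ j, y j ∈ H1 := fun j => ((hmem3 (y j)).1 (hyH3 j)).1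
      have hg := hhom1 y hy hyH1
      simp only [hg1] at hg
      by_cases hfy : (f y).val < k
      · rw [dif_pos hfy] at hg
        have hvy : (f y).val = i1.val := by simpa using congrArg Fin.val hg
        have hi1lt : i1.val < k := i1.2
        apply Fin.ext
        simp
        omega
      · exfalso
        have hfk : (f y).val = k := by have := (f y).2; omega
        exact hfl (by apply Fin.ext; simpa [Fin.val_last] using hfk)


end Aux

/-- For each n, k ≥ 2, RCA*₀ proves RT^n_k ↔ RT^n_{k+1}. -/
theorem rt_colour_reduction (n k : ℕ) (hn : 2 ≤ n) (hk : 2 ≤ k)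
    (S : Struct) (𝒳 : Set (Set S.carrier)) (hRCA : RCAstar S 𝒳) :
    RT S 𝒳 n k ↔ RT S 𝒳 n (k + 1) := by
  obtain ⟨m, rfl⟩ : ∃ m, n = m + 1 := ⟨n - 1, by omega⟩
  exact ⟨fun hRT => rt_up hk hRCA hRT, fun hRT => rt_down hk hRCA hRT⟩

end RM
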